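/- Fix m ≥ 1 and integers μ_k < ν_k (k = 1,…,m). Call a reduced paradiagram with no * entries a reduced vertex; the reduced vertices are exactly the m+1 words 0^j 1^{m−j}, j = 0,…,m. For an L-equivalence class A of reduced paradiagrams of length m, let v(A) be the set of reduced vertices δ' such that F(δ') ⊆ U(A). Then: (i) the map A ↦ v(A) is a bijection from the set of L-equivalence classes of reduced paradiagrams of length m onto the set of nonempty subsets of the m+1 reduced vertices; (ii) for any two L-classes A and B, if v(A) ∩ v(B) ≠ ∅ then U(A) ∩ U(B) = U(C), where C is the unique L-class with v(C) = v(A) ∩ v(B), and if v(A) ∩ v(B) = ∅ then U(A) ∩ U(B) = ∅; (iii) for every L-class A whose paradiagrams have k stars, the set U(A) ⊆ ℝ^m is homeomorphic to the closed cube [0,1]^k. -/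

import Mathlib

/-- The alphabet `{0, 1, *}` of paradiagrams. -/
inductive PD where
  | zero : PD
  | one : PD
  | star : PD
deriving DecidableEq

/-- A paradiagram is reduced if no entry `1` is immediately followed by an entry `0`. -/
def Reduced {m : ℕ} (δ : Fin m → PD) : Prop :=
  ∀ (j : ℕ) (h : j + 1 < m),
    ¬(δ ⟨j, Nat.lt_of_succ_lt h⟩ = PD.one ∧ δ ⟨j + 1, h⟩ = PD.zero)

/-- The face `F(δ) = {y ∈ Π : y_k = μ_k if δ_k = 0, y_k = ν_k if δ_k = 1}` of the
parallelepiped `Π = {y : μ_k ≤ y_k ≤ ν_k}`. -/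
def Face {m : ℕ} (μ ν : Fin m → ℤ) (δ : Fin m → PD) : Set (Fin m → ℝ) :=
  {y | ∀ k, ((μ k : ℝ) ≤ y k ∧ y k ≤ (ν k : ℝ)) ∧
            (δ k = PD.zero → y k = (μ k : ℝ)) ∧ (δ k = PD.one → y k = (ν k : ℝ))}

/-- An L-move replaces a consecutive pair of entries `(*, 0)` by `(1, *)`. -/
def LMove {m : ℕ} (δ δ' : Fin m → PD) : Prop :=
  ∃ (j : ℕ) (h : j + 1 < m),
    δ ⟨j, Nat.lt_of_succ_lt h⟩ = PD.star ∧ δ ⟨j + 1, h⟩ = PD.zero ∧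
    δ' ⟨j, Nat.lt_of_succ_lt h⟩ = PD.one ∧ δ' ⟨j + 1, h⟩ = PD.star ∧
    ∀ k : Fin m, (k : ℕ) ≠ j → (k : ℕ) ≠ j + 1 → δ' k = δ k

/-- L-equivalence: the equivalence relation generated by L-moves. -/
def LEquiv {m : ℕ} (δ δ' : Fin m → PD) : Prop := Relation.EqvGen LMove δ δ'

/-- An L-equivalence class of reduced paradiagrams. -/
def IsLClass {m : ℕ} (A : Set (Fin m → PD)) : Prop :=
  ∃ δ₀, Reduced δ₀ ∧ A = {δ | LEquiv δ₀ δ}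

/-- `U(A) = ⋃_{δ ∈ A} F(δ)`. -/
def UF {m : ℕ} (μ ν : Fin m → ℤ) (A : Set (Fin m → PD)) : Set (Fin m → ℝ) :=
  ⋃ δ ∈ A, Face μ ν δ

/-- The number of `*` entries of a paradiagram. -/
def stars {m : ℕ} (δ : Fin m → PD) : ℕ :=
  (Finset.univ.filter fun k => δ k = PD.star).card

/-- The size of the initial parabox: the number of leading `0` entries. -/
def initSize {m : ℕ} (δ : Fin m → PD) : ℕ :=
  ((List.ofFn δ).takeWhile (fun x => decide (x = PD.zero))).length

/-- The paramitosis of a paradiagram `δ` with initial parabox `0^a`: the set of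
paradiagrams obtained by replacing the initial segment `0^a` by `1^j * 0^{a−1−j}`
for `j = 0, …, a−1` (empty if `a = 0`). -/
def Mop {m : ℕ} (δ : Fin m → PD) : Set (Fin m → PD) :=
  {δ' | ∃ j : ℕ, j < initSize δ ∧ δ' = fun k : Fin m =>
      if k.val < j then PD.one
      else if k.val = j then PD.star
      else if k.val < initSize δ then PD.zero
      else δ k}

/-- Paramitosis of a set of paradiagrams. -/
def MSet {m : ℕ} (A : Set (Fin m → PD)) : Set (Fin m → PD) := ⋃ δ ∈ A, Mop δ

/-- `𝒮(S) = ∑_{y ∈ S ∩ ℤ^m} t^{σ(y)} ∈ ℤ[t,t⁻¹]`, where `σ(y) = y₁ + ⋯ + y_m`. -/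
noncomputable def charS {m : ℕ} (S : Set (Fin m → ℝ)) : LaurentPolynomial ℤ :=
  ∑ᶠ z ∈ {z : Fin m → ℤ | (fun k => (z k : ℝ)) ∈ S}, LaurentPolynomial.T (∑ k, z k)

/-- A reduced vertex: a reduced paradiagram with no `*` entries. -/
def RV {m : ℕ} (δ : Fin m → PD) : Prop := Reduced δ ∧ stars δ = 0

/-- `v(A)`: the set of reduced vertices `δ'` with `F(δ') ⊆ U(A)`. -/
def vset {m : ℕ} (μ ν : Fin m → ℤ) (A : Set (Fin m → PD)) : Set (Fin m → PD) :=
  {δ' | RV δ' ∧ Face μ ν δ' ⊆ UF μ ν A}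


namespace S11
variable {m : ℕ}

/-- Extension of a paradiagram to `ℕ`, padded with `1`s. -/
def Dx (δ : Fin m → PD) : ℕ → PD := fun p => if h : p < m then δ ⟨p, h⟩ else PD.one

lemma Dx_lt (δ : Fin m → PD) {p : ℕ} (h : p < m) : Dx δ p = δ ⟨p, h⟩ := dif_pos h

lemma Dx_ge (δ : Fin m → PD) {p : ℕ} (h : m ≤ p) : Dx δ p = PD.one := dif_neg (not_lt.2 h)

lemma reduced_iff (δ : Fin m → PD) :
    Reduced δ ↔ ∀ p : ℕ, ¬(Dx δ p = PD.one ∧ Dx δ (p+1) = PD.zero) := by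
  constructor
  · intro H p ⟨h1, h2⟩
    rcases lt_or_ge (p+1) m with h | h
    · exact H p h ⟨by rwa [Dx_lt δ (Nat.lt_of_succ_lt h)] at h1, by rwa [Dx_lt δ h] at h2⟩
    · rw [Dx_ge δ h] at h2; cases h2
  · intro H j hj ⟨h1, h2⟩
    exact H j ⟨by rwa [Dx_lt δ (Nat.lt_of_succ_lt hj)], by rwa [Dx_lt δ hj]⟩

/-- The cut condition at position `j`. -/
def cutP (δ : Fin m → PD) (j : ℕ) : Prop :=
  (j = 0 ∨ Dx δ (j-1) ≠ PD.one) ∧ Dx δ j ≠ PD.zero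

instance (δ : Fin m → PD) : DecidablePred (cutP δ) := fun _ => by
  unfold cutP; infer_instance

/-- The set of cuts of a paradiagram: the complete invariant of L-equivalence. -/
def cutset (δ : Fin m → PD) : Finset ℕ := (Finset.range (m+1)).filter (cutP δ)

lemma mem_cutset {δ : Fin m → PD} {j : ℕ} : j ∈ cutset δ ↔ j ≤ m ∧ cutP δ j := by
  simp [cutset, Nat.lt_succ_iff]

lemma cutset_nonempty (δ : Fin m → PD) : (cutset δ).Nonempty := by
  -- the first non-zero position is a cut
  have hex : ∃ p, Dx δ p ≠ PD.zero := ⟨m, by rw [Dx_ge δ le_rfl]; simp⟩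
  classical
  set j := Nat.find hex with hjdef
  refine ⟨j, mem_cutset.2 ⟨?_, ?_, Nat.find_spec hex⟩⟩
  · by_contra hc
    push_neg at hc
    exact Nat.find_min hex hc (by rw [Dx_ge δ le_rfl]; simp)
  · rcases Nat.eq_zero_or_pos j with h0 | h0
    · exact Or.inl h0
    · refine Or.inr ?_
      have := Nat.find_min hex (m := j - 1) (by omega)
      simp only [not_not] at this
      rw [this]; simp

lemma lmove_iff {δ δ' : Fin m → PD} : LMove δ δ' ↔ ∃ j, j + 1 < m ∧
    Dx δ j = PD.star ∧ Dx δ (j+1) = PD.zero ∧ Dx δ' j = PD.one ∧ Dx δ' (j+1) = PD.star ∧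
    ∀ p, p ≠ j → p ≠ j+1 → Dx δ' p = Dx δ p := by
  constructor
  · rintro ⟨j, hj, a1, a2, b1, b2, hoff⟩
    refine ⟨j, hj, ?_, ?_, ?_, ?_, ?_⟩
    · rwa [Dx_lt δ (Nat.lt_of_succ_lt hj)]
    · rwa [Dx_lt δ hj]
    · rwa [Dx_lt δ' (Nat.lt_of_succ_lt hj)]
    · rwa [Dx_lt δ' hj]
    · intro p hp1 hp2
      rcases lt_or_ge p m with h | h
      · rw [Dx_lt δ' h, Dx_lt δ h]
        exact hoff ⟨p, h⟩ hp1 hp2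
      · rw [Dx_ge δ' h, Dx_ge δ h]
  · rintro ⟨j, hj, a1, a2, b1, b2, hoff⟩
    refine ⟨j, hj, ?_, ?_, ?_, ?_, ?_⟩
    · rwa [Dx_lt δ (Nat.lt_of_succ_lt hj)] at a1
    · rwa [Dx_lt δ hj] at a2
    · rwa [Dx_lt δ' (Nat.lt_of_succ_lt hj)] at b1
    · rwa [Dx_lt δ' hj] at b2
    · intro k h1 h2
      have := hoff (k : ℕ) h1 h2
      rw [Dx_lt δ' k.isLt, Dx_lt δ k.isLt] at this
      exact this

lemma lmove_reduced {δ δ' : Fin m → PD} (hmv : LMove δ δ') : Reduced δ ↔ Reduced δ' := by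
  rw [reduced_iff, reduced_iff]
  obtain ⟨j, hj, d1, d2, e1, e2, hoff⟩ := lmove_iff.1 hmv
  constructor
  · intro H p ⟨h1, h2⟩
    by_cases c1 : p = j
    · subst c1
      rw [e2] at h2; cases h2
    by_cases c2 : p = j + 1
    · subst c2
      rw [e2] at h1; cases h1
    by_cases c3 : p + 1 = j
    · rw [c3, e1] at h2; cases h2
    have h1' := (hoff p c1 c2).symm.trans h1
    have h2' := (hoff (p+1) (by omega) (by omega)).symm.trans h2
    exact H p ⟨h1', h2'⟩
  · intro H p ⟨h1, h2⟩
    by_cases c1 : p = j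
    · subst c1; rw [d1] at h1; cases h1
    by_cases c2 : p = j + 1
    · subst c2; rw [d2] at h1; cases h1
    by_cases c3 : p + 1 = j
    · rw [c3, d1] at h2; cases h2
    have h1' := (hoff p c1 c2).trans h1
    have h2' := (hoff (p+1) (by omega) (by omega)).trans h2
    exact H p ⟨h1', h2'⟩

lemma lmove_cutset {δ δ' : Fin m → PD} (hmv : LMove δ δ') : cutset δ' = cutset δ := by
  obtain ⟨j, hj, d1, d2, e1, e2, hoff⟩ := lmove_iff.1 hmv
  ext q
  simp only [mem_cutset]
  refine and_congr_right fun _ => ?_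
  unfold cutP
  by_cases c1 : q = j
  · rw [c1]
    rcases Nat.eq_zero_or_pos j with h0 | h0
    · subst h0
      rw [e1, d1]
      simp
    · have hq1 : j - 1 ≠ j := by omega
      have hq2 : j - 1 ≠ j + 1 := by omega
      rw [hoff _ hq1 hq2, e1, d1]
      simp
  by_cases c2 : q = j + 1
  · subst c2
    constructor
    · rintro ⟨h1, -⟩
      rcases h1 with h | h
      · exact absurd h (by omega)
      · simp only [Nat.add_sub_cancel] at h; exact absurd e1 h
    · rintro ⟨-, h2⟩; exact absurd d2 h2
  by_cases c3 : q = j + 2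
  · subst c3
    have : j + 2 - 1 = j + 1 := by omega
    rw [this, e2, d2, hoff (j+2) (by omega) (by omega)]
    simp
  · have hq1 : q - 1 ≠ j := by omega
    have hq2 : q - 1 ≠ j + 1 := by omega
    rw [hoff q c1 c2, hoff (q-1) hq1 hq2]

lemma sum_offdiag {f g : ℕ → ℕ} {j n : ℕ} (hj : j + 1 < n)
    (hoff : ∀ p, p ≠ j → p ≠ j + 1 → f p = g p)
    (hpair : f j + f (j+1) = g j + g (j+1)) :
    ∑ p ∈ Finset.range n, f p = ∑ p ∈ Finset.range n, g p := by
  have hj1 : j ∈ Finset.range n := Finset.mem_range.2 (by omega)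
  have hj2 : j + 1 ∈ (Finset.range n).erase j := by
    rw [Finset.mem_erase]; exact ⟨by omega, Finset.mem_range.2 hj⟩
  have key : ∀ h : ℕ → ℕ, ∑ p ∈ Finset.range n, h p =
      h j + (h (j+1) + ∑ p ∈ ((Finset.range n).erase j).erase (j+1), h p) := by
    intro h
    rw [← Finset.add_sum_erase _ h hj1, ← Finset.add_sum_erase _ h hj2]
  rw [key f, key g]
  have hbase : ∑ p ∈ ((Finset.range n).erase j).erase (j+1), f p =
      ∑ p ∈ ((Finset.range n).erase j).erase (j+1), g p := by
    refine Finset.sum_congr rfl fun p hp => ?_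
    rw [Finset.mem_erase, Finset.mem_erase] at hp
    exact hoff p hp.2.1 hp.1
  omega

lemma stars_eq_sum (δ : Fin m → PD) :
    stars δ = ∑ p ∈ Finset.range m, (if Dx δ p = PD.star then 1 else 0) := by
  rw [stars, Finset.card_filter,
    ← Fin.sum_univ_eq_sum_range (fun p => if Dx δ p = PD.star then 1 else 0) m]
  refine Finset.sum_congr rfl fun k _ => ?_
  rw [Dx_lt δ k.isLt, Fin.eta]

lemma lmove_stars {δ δ' : Fin m → PD} (hmv : LMove δ δ') : stars δ' = stars δ := by
  obtain ⟨j, hj, d1, d2, e1, e2, hoff⟩ := lmove_iff.1 hmv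
  rw [stars_eq_sum, stars_eq_sum]
  refine sum_offdiag hj (fun p h1 h2 => by rw [hoff p h1 h2]) ?_
  rw [d1, d2, e1, e2]; simp

/-- weight used for termination of the normal-form algorithm -/
def wt (δ : Fin m → PD) : ℕ := ∑ p ∈ Finset.range m, (if Dx δ p = PD.star then p else 0)

lemma lmove_wt {δ δ' : Fin m → PD} (hmv : LMove δ δ') : wt δ' = wt δ + 1 := by
  obtain ⟨j, hj, d1, d2, e1, e2, hoff⟩ := lmove_iff.1 hmv
  unfold wt
  have : (∑ p ∈ Finset.range m, (if Dx δ' p = PD.star then p else 0)) =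
      ∑ p ∈ Finset.range m, ((if Dx δ p = PD.star then p else 0) + (if p = j + 1 then 1 else 0)) := by
    refine sum_offdiag hj ?_ ?_
    · intro p h1 h2
      rw [hoff p h1 h2, if_neg h2, Nat.add_zero]
    · rw [d1, d2, e1, e2]; simp
  rw [this, Finset.sum_add_distrib, Finset.sum_ite_eq' (Finset.range m)]
  simp [Finset.mem_range.2 hj]

end S11

namespace S11
variable {m : ℕ}

/-- canonical representative of the class with cut set `V`. -/
def canon (V : Finset ℕ) : Fin m → PD := fun k =>
  if ∃ j ∈ V, (k : ℕ) < j then (if (k : ℕ) ∈ V then PD.star else PD.zero) else PD.one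

lemma canonDx (V : Finset ℕ) (hV : ∀ j ∈ V, j ≤ m) (p : ℕ) :
    Dx (canon (m := m) V) p = if ∃ j ∈ V, p < j then (if p ∈ V then PD.star else PD.zero)
      else PD.one := by
  rcases lt_or_ge p m with h | h
  · rw [Dx_lt _ h]; rfl
  · rw [Dx_ge _ h, if_neg]
    rintro ⟨j, hj, hpj⟩
    exact absurd (hV j hj) (by omega)

lemma canon_reduced (V : Finset ℕ) (hV : ∀ j ∈ V, j ≤ m) : Reduced (canon (m := m) V) := by
  rw [reduced_iff]
  rintro p ⟨h1, h2⟩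
  rw [canonDx V hV] at h1 h2
  by_cases c2 : ∃ j ∈ V, p + 1 < j
  · obtain ⟨j, hj, hjp⟩ := c2
    rw [if_pos ⟨j, hj, by omega⟩] at h1
    split_ifs at h1 <;> cases h1
  · rw [if_neg c2] at h2; cases h2

lemma canon_cutset (V : Finset ℕ) (hV : ∀ j ∈ V, j ≤ m) (hne : V.Nonempty) :
    cutset (canon (m := m) V) = V := by
  ext j
  rw [mem_cutset]
  constructor
  · rintro ⟨hjm, hc1, hc2⟩
    rw [canonDx V hV] at hc2
    by_cases cbig : ∃ j' ∈ V, j < j'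
    · rw [if_pos cbig] at hc2
      by_cases hin : j ∈ V
      · exact hin
      · rw [if_neg hin] at hc2; exact absurd rfl hc2
    · -- value is one; use the left cut condition
      rcases hc1 with h0 | hleft
      · subst h0
        obtain ⟨x, hx⟩ := hne
        rcases Nat.eq_zero_or_pos x with hx0 | hx0
        · rwa [← hx0]
        · exact absurd ⟨x, hx, hx0⟩ cbig
      · rw [canonDx V hV] at hleft
        by_cases cbig' : ∃ j' ∈ V, j - 1 < j'
        · obtain ⟨j', hj', hjj'⟩ := cbig'
          have : j' = j := by
            rcases lt_or_ge j j' with hl | hl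
            · exact absurd ⟨j', hj', hl⟩ cbig
            · omega
          rwa [← this]
        · rw [if_neg cbig'] at hleft; exact absurd rfl hleft
  · intro hj
    refine ⟨hV j hj, ?_, ?_⟩
    · rcases Nat.eq_zero_or_pos j with h0 | h0
      · exact Or.inl h0
      · refine Or.inr ?_
        rw [canonDx V hV, if_pos ⟨j, hj, by omega⟩]
        split_ifs <;> simp
    · rw [canonDx V hV]
      by_cases cbig : ∃ j' ∈ V, j < j'
      · rw [if_pos cbig, if_pos hj]; simp
      · rw [if_neg cbig]; simp

lemma ones_up {δ : Fin m → PD} (hred : Reduced δ)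
    (hB : ¬ ∃ p, p + 1 < m ∧ Dx δ p = PD.one ∧ Dx δ (p+1) = PD.star) :
    ∀ p q, Dx δ p = PD.one → p ≤ q → Dx δ q = PD.one := by
  have hstep : ∀ p, Dx δ p = PD.one → Dx δ (p+1) = PD.one := by
    intro p h1
    cases val : Dx δ (p+1) with
    | zero => exact absurd ⟨h1, val⟩ ((reduced_iff δ).1 hred p)
    | one => rfl
    | star =>
      have hlt : p + 1 < m := by
        by_contra hge
        rw [Dx_ge δ (by omega)] at val; cases val
      exact absurd ⟨p, hlt, h1, val⟩ hB
  intro p q h1 hpq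
  induction hpq with
  | refl => exact h1
  | step _ ih => exact hstep _ ih

lemma cut_above_fuel {δ : Fin m → PD} :
    ∀ n p, m - p ≤ n → Dx δ p ≠ PD.one → ∃ j ∈ cutset δ, p < j := by
  intro n
  induction n with
  | zero =>
    intro p hfuel hp
    rw [Dx_ge δ (by omega)] at hp
    exact absurd rfl hp
  | succ n ih =>
    intro p hfuel hp
    have hpm : p < m := by
      by_contra hge
      rw [Dx_ge δ (by omega)] at hp
      exact hp rfl
    by_cases c : Dx δ (p+1) = PD.zero
    · obtain ⟨j, hj, hjp⟩ := ih (p+1) (by omega) (by rw [c]; simp)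
      exact ⟨j, hj, by omega⟩
    · exact ⟨p+1, mem_cutset.2 ⟨by omega, Or.inr (by simpa using hp), c⟩, by omega⟩

lemma cut_above {δ : Fin m → PD} {p : ℕ} (hp : Dx δ p ≠ PD.one) :
    ∃ j ∈ cutset δ, p < j := cut_above_fuel (m - p) p le_rfl hp

lemma cut_below {δ : Fin m → PD} : ∀ p, Dx δ p ≠ PD.zero → ∃ j ∈ cutset δ, j ≤ p := by
  intro p
  induction p with
  | zero => exact fun hp => ⟨0, mem_cutset.2 ⟨by omega, Or.inl rfl, hp⟩, le_rfl⟩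
  | succ p ih =>
    intro hp
    by_cases c : Dx δ p = PD.zero
    · have hpm : p < m := by
        by_contra hge
        rw [Dx_ge δ (by omega)] at c
        cases c
      refine ⟨p+1, mem_cutset.2 ⟨by omega, Or.inr ?_, hp⟩, le_rfl⟩
      simpa using (by rw [c]; simp : Dx δ p ≠ PD.one)
    · obtain ⟨j, hj, hjp⟩ := ih c
      exact ⟨j, hj, by omega⟩

lemma cut_between_fuel {δ : Fin m → PD} :
    ∀ n p p', p' - p ≤ n → p < p' → Dx δ p ≠ PD.one → Dx δ p' ≠ PD.zero →
      ∃ j ∈ cutset δ, p < j ∧ j ≤ p' := by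
  intro n
  induction n with
  | zero => intro p p' h1 h2 _ _; omega
  | succ n ih =>
    intro p p' hfuel hlt hp hp'
    have hpm : p < m := by
      by_contra hge
      rw [Dx_ge δ (by omega)] at hp
      exact hp rfl
    by_cases c : Dx δ (p+1) = PD.zero
    · have hne : p + 1 ≠ p' := fun he => hp' (he ▸ c)
      obtain ⟨j, hj, hjp, hjp'⟩ := ih (p+1) p' (by omega) (by omega) (by rw [c]; simp) hp'
      exact ⟨j, hj, by omega, hjp'⟩
    · exact ⟨p+1, mem_cutset.2 ⟨by omega, Or.inr (by simpa using hp), c⟩, by omega, by omega⟩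

lemma cut_between {δ : Fin m → PD} {p p' : ℕ} (hlt : p < p') (hp : Dx δ p ≠ PD.one)
    (hp' : Dx δ p' ≠ PD.zero) : ∃ j ∈ cutset δ, p < j ∧ j ≤ p' :=
  cut_between_fuel (p' - p) p p' le_rfl hlt hp hp'

lemma noonestar_canon {δ : Fin m → PD} (hred : Reduced δ)
    (hB : ¬ ∃ p, p + 1 < m ∧ Dx δ p = PD.one ∧ Dx δ (p+1) = PD.star) :
    δ = canon (cutset δ) := by
  have hVm : ∀ j ∈ cutset δ, j ≤ m := fun j hj => (mem_cutset.1 hj).1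
  funext k
  have hk := k.isLt
  have key : Dx δ (k : ℕ) = Dx (canon (m := m) (cutset δ)) (k : ℕ) := by
    rw [canonDx _ hVm]
    cases val : Dx δ (k : ℕ) with
    | one =>
      rw [if_neg]
      rintro ⟨j, hj, hkj⟩
      obtain ⟨-, hc1, -⟩ := mem_cutset.1 hj
      rcases hc1 with h0 | hleft
      · omega
      · exact hleft (ones_up hred hB _ _ val (by omega))
    | star =>
      have hbig : ∃ j ∈ cutset δ, (k : ℕ) < j := cut_above (by rw [val]; simp)
      have hmem : (k : ℕ) ∈ cutset δ := by
        rw [mem_cutset]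
        refine ⟨by omega, ?_, by rw [val]; simp⟩
        rcases Nat.eq_zero_or_pos (k : ℕ) with h0 | h0
        · exact Or.inl h0
        · refine Or.inr fun hone => ?_
          have he : (k : ℕ) - 1 + 1 = (k : ℕ) := by omega
          exact hB ⟨(k : ℕ) - 1, by omega, hone, by rwa [he]⟩
      rw [if_pos hbig, if_pos hmem]
    | zero =>
      have hbig : ∃ j ∈ cutset δ, (k : ℕ) < j := cut_above (by rw [val]; simp)
      have hnot : (k : ℕ) ∉ cutset δ := fun hmem => (mem_cutset.1 hmem).2.2 val
      rw [if_pos hbig, if_neg hnot]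
  rw [Dx_lt δ hk, Dx_lt _ hk] at key
  exact key

lemma to_canon_fuel : ∀ (n : ℕ) (δ : Fin m → PD), Reduced δ → wt δ ≤ n →
    LEquiv δ (canon (cutset δ)) := by
  intro n
  induction n with
  | zero =>
    intro δ hred hw
    by_cases hA : ∃ p, p + 1 < m ∧ Dx δ p = PD.one ∧ Dx δ (p+1) = PD.star
    · obtain ⟨p, hp, h1, h2⟩ := hA
      exfalso
      have : (if Dx δ (p+1) = PD.star then p+1 else 0) ≤ wt δ := by
        refine Finset.single_le_sum (f := fun q => if Dx δ q = PD.star then q else 0)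
          (fun i _ => by positivity) (Finset.mem_range.2 hp)
      rw [if_pos h2] at this
      omega
    · rw [← noonestar_canon hred hA]
      exact Relation.EqvGen.refl δ
  | succ n ih =>
    intro δ hred hw
    by_cases hA : ∃ p, p + 1 < m ∧ Dx δ p = PD.one ∧ Dx δ (p+1) = PD.star
    · obtain ⟨p, hp, h1, h2⟩ := hA
      set δ'' : Fin m → PD := fun k =>
        if (k : ℕ) = p then PD.star else if (k : ℕ) = p + 1 then PD.zero else δ k with hδ''
      have hd1 : Dx δ'' p = PD.star := by
        rw [Dx_lt δ'' (by omega : p < m)]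
        simp [hδ'']
      have hd2 : Dx δ'' (p+1) = PD.zero := by
        rw [Dx_lt δ'' hp]
        simp [hδ'']
      have hoff : ∀ q, q ≠ p → q ≠ p + 1 → Dx δ q = Dx δ'' q := by
        intro q hq1 hq2
        rcases lt_or_ge q m with hlt | hge
        · rw [Dx_lt δ hlt, Dx_lt δ'' hlt]
          simp [hδ'', hq1, hq2]
        · rw [Dx_ge δ hge, Dx_ge δ'' hge]
      have hmv : LMove δ'' δ := lmove_iff.2 ⟨p, hp, hd1, hd2, h1, h2,
        fun q hq1 hq2 => hoff q hq1 hq2⟩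
      have hred'' : Reduced δ'' := (lmove_reduced hmv).2 hred
      have hwt : wt δ = wt δ'' + 1 := lmove_wt hmv
      have hstep := ih δ'' hred'' (by omega)
      rw [lmove_cutset hmv]
      exact Relation.EqvGen.trans _ _ _
        (Relation.EqvGen.symm _ _ (Relation.EqvGen.rel _ _ hmv)) hstep
    · rw [← noonestar_canon hred hA]
      exact Relation.EqvGen.refl δ

lemma to_canon {δ : Fin m → PD} (hred : Reduced δ) : LEquiv δ (canon (cutset δ)) :=
  to_canon_fuel (wt δ) δ hred le_rfl

lemma lequiv_inv {δ δ' : Fin m → PD} (h : LEquiv δ δ') :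
    (Reduced δ ↔ Reduced δ') ∧ cutset δ = cutset δ' ∧ stars δ = stars δ' := by
  induction h with
  | rel a b hr => exact ⟨lmove_reduced hr, (lmove_cutset hr).symm, (lmove_stars hr).symm⟩
  | refl a => exact ⟨Iff.rfl, rfl, rfl⟩
  | symm a b _ ihab => exact ⟨ihab.1.symm, ihab.2.1.symm, ihab.2.2.symm⟩
  | trans a b c _ _ ih1 ih2 =>
    exact ⟨ih1.1.trans ih2.1, ih1.2.1.trans ih2.2.1, ih1.2.2.trans ih2.2.2⟩

lemma class_eq {δ₀ : Fin m → PD} (h0 : Reduced δ₀) :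
    {δ | LEquiv δ₀ δ} = {δ | Reduced δ ∧ cutset δ = cutset δ₀} := by
  ext δ
  simp only [Set.mem_setOf_eq]
  constructor
  · intro hh
    obtain ⟨hr, hc, -⟩ := lequiv_inv hh
    exact ⟨hr.1 h0, hc.symm⟩
  · rintro ⟨hr, hc⟩
    have h1 := to_canon h0
    have h2 := to_canon hr
    rw [hc] at h2
    exact Relation.EqvGen.trans _ _ _ h1 (Relation.EqvGen.symm _ _ h2)

lemma isLClass_iff {A : Set (Fin m → PD)} : IsLClass A ↔
    ∃ V : Finset ℕ, V.Nonempty ∧ (∀ j ∈ V, j ≤ m) ∧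
      A = {δ | Reduced δ ∧ cutset δ = V} := by
  constructor
  · rintro ⟨δ₀, h0, rfl⟩
    exact ⟨cutset δ₀, cutset_nonempty δ₀, fun j hj => (mem_cutset.1 hj).1, class_eq h0⟩
  · rintro ⟨V, hne, hVm, rfl⟩
    refine ⟨canon V, canon_reduced V hVm, ?_⟩
    rw [class_eq (canon_reduced V hVm), canon_cutset V hVm hne]

lemma stars_eq_of_class {δ δ' : Fin m → PD} (h : Reduced δ) (h' : Reduced δ')
    (hc : cutset δ = cutset δ') : stars δ = stars δ' := by
  have h1 := (lequiv_inv (to_canon h)).2.2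
  have h2 := (lequiv_inv (to_canon h')).2.2
  rw [hc] at h1
  omega

end S11

namespace S11
variable {m : ℕ}

/-- Explicit description of `U(A)` for the class with cut set `V`. -/
def ESet (μ ν : Fin m → ℤ) (V : Finset ℕ) : Set (Fin m → ℝ) :=
  {y | (∀ k : Fin m, (μ k : ℝ) ≤ y k ∧ y k ≤ (ν k : ℝ)) ∧
       (∀ k : Fin m, (∀ j ∈ V, (k : ℕ) < j) → y k = (μ k : ℝ)) ∧
       (∀ k : Fin m, (∀ j ∈ V, j ≤ (k : ℕ)) → y k = (ν k : ℝ)) ∧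
       (∀ k k' : Fin m, (k : ℕ) < (k' : ℕ) → (∀ j ∈ V, ¬((k : ℕ) < j ∧ j ≤ (k' : ℕ))) →
         y k < (ν k : ℝ) → (μ k' : ℝ) < y k' → False)}

section Geometry

variable {μ ν : Fin m → ℤ}

lemma face_subset_E {δ : Fin m → PD} (hred : Reduced δ) :
    Face μ ν δ ⊆ ESet μ ν (cutset δ) := by
  intro y hy
  refine ⟨fun k => (hy k).1, ?_, ?_, ?_⟩
  · intro k hk
    refine (hy k).2.1 ?_
    by_contra hz
    obtain ⟨j, hj, hjk⟩ := cut_below (k : ℕ) (by rwa [Dx_lt δ k.isLt, Fin.eta])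
    exact absurd (hk j hj) (by omega)
  · intro k hk
    refine (hy k).2.2 ?_
    by_contra hz
    obtain ⟨j, hj, hjk⟩ := cut_above (p := (k : ℕ)) (by rwa [Dx_lt δ k.isLt, Fin.eta])
    exact absurd (hk j hj) (by omega)
  · intro k k' hlt hnc h1 h2
    have hk1 : Dx δ (k : ℕ) ≠ PD.one := by
      rw [Dx_lt δ k.isLt, Fin.eta]
      intro he
      rw [(hy k).2.2 he] at h1
      exact lt_irrefl _ h1
    have hk2 : Dx δ (k' : ℕ) ≠ PD.zero := by
      rw [Dx_lt δ k'.isLt, Fin.eta]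
      intro he
      rw [(hy k').2.1 he] at h2
      exact lt_irrefl _ h2
    obtain ⟨j, hj, hj1, hj2⟩ := cut_between hlt hk1 hk2
    exact hnc j hj ⟨hj1, hj2⟩

open Classical in
/-- the witness paradiagram whose face contains a given point of `E(V)`. -/
noncomputable def wit (ν : Fin m → ℤ) (V : Finset ℕ) (y : Fin m → ℝ) : Fin m → PD :=
  fun k =>
    if ∃ j ∈ V, j ≤ (k : ℕ) then
      (if ∃ j ∈ V, (k : ℕ) < j then
        (if y k < (ν k : ℝ) then
          (if ∀ r : Fin m, (r : ℕ) < (k : ℕ) → (∀ j ∈ V, ¬((r : ℕ) < j ∧ j ≤ (k : ℕ))) →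
              y r = (ν r : ℝ) then PD.star else PD.zero)
         else (if (k : ℕ) + 1 ∈ V then PD.star else PD.one))
       else PD.one)
    else PD.zero

variable {V : Finset ℕ} {y : Fin m → ℝ}

section WitVal
variable (k : Fin m)

lemma wit_A (h1 : ¬ ∃ j ∈ V, j ≤ (k : ℕ)) : wit ν V y k = PD.zero := by
  unfold wit; rw [if_neg h1]

lemma wit_B (h1 : ∃ j ∈ V, j ≤ (k : ℕ)) (h2 : ¬ ∃ j ∈ V, (k : ℕ) < j) :
    wit ν V y k = PD.one := by
  unfold wit; rw [if_pos h1, if_neg h2]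

lemma wit_C (h1 : ∃ j ∈ V, j ≤ (k : ℕ)) (h2 : ∃ j ∈ V, (k : ℕ) < j)
    (h3 : y k < (ν k : ℝ))
    (h4 : ∀ r : Fin m, (r : ℕ) < (k : ℕ) → (∀ j ∈ V, ¬((r : ℕ) < j ∧ j ≤ (k : ℕ))) →
      y r = (ν r : ℝ)) : wit ν V y k = PD.star := by
  unfold wit; rw [if_pos h1, if_pos h2, if_pos h3, if_pos h4]

lemma wit_D (h1 : ∃ j ∈ V, j ≤ (k : ℕ)) (h2 : ∃ j ∈ V, (k : ℕ) < j)
    (h3 : y k < (ν k : ℝ))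
    (h4 : ¬ ∀ r : Fin m, (r : ℕ) < (k : ℕ) → (∀ j ∈ V, ¬((r : ℕ) < j ∧ j ≤ (k : ℕ))) →
      y r = (ν r : ℝ)) : wit ν V y k = PD.zero := by
  unfold wit; rw [if_pos h1, if_pos h2, if_pos h3, if_neg h4]

lemma wit_E (h1 : ∃ j ∈ V, j ≤ (k : ℕ)) (h2 : ∃ j ∈ V, (k : ℕ) < j)
    (h3 : ¬ y k < (ν k : ℝ)) (h5 : (k : ℕ) + 1 ∈ V) : wit ν V y k = PD.star := by
  unfold wit; rw [if_pos h1, if_pos h2, if_neg h3, if_pos h5]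

lemma wit_F (h1 : ∃ j ∈ V, j ≤ (k : ℕ)) (h2 : ∃ j ∈ V, (k : ℕ) < j)
    (h3 : ¬ y k < (ν k : ℝ)) (h5 : ¬ (k : ℕ) + 1 ∈ V) : wit ν V y k = PD.one := by
  unfold wit; rw [if_pos h1, if_pos h2, if_neg h3, if_neg h5]

lemma wit_eq_one_cases (hw : wit ν V y k = PD.one) :
    (∃ j ∈ V, j ≤ (k : ℕ)) ∧ ((¬ ∃ j ∈ V, (k : ℕ) < j) ∨
      (¬ y k < (ν k : ℝ) ∧ ¬ (k : ℕ) + 1 ∈ V)) := by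
  by_cases c1 : ∃ j ∈ V, j ≤ (k : ℕ)
  · refine ⟨c1, ?_⟩
    by_cases c2 : ∃ j ∈ V, (k : ℕ) < j
    · refine Or.inr ?_
      by_cases c3 : y k < (ν k : ℝ)
      · by_cases c4 : ∀ r : Fin m, (r : ℕ) < (k : ℕ) →
            (∀ j ∈ V, ¬((r : ℕ) < j ∧ j ≤ (k : ℕ))) → y r = (ν r : ℝ)
        · rw [wit_C k c1 c2 c3 c4] at hw; exact PD.noConfusion hw
        · rw [wit_D k c1 c2 c3 c4] at hw; exact PD.noConfusion hw
      · by_cases c5 : (k : ℕ) + 1 ∈ V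
        · rw [wit_E k c1 c2 c3 c5] at hw; exact PD.noConfusion hw
        · exact ⟨c3, c5⟩
    · exact Or.inl c2
  · rw [wit_A k c1] at hw; exact PD.noConfusion hw

lemma wit_eq_zero_cases (hw : wit ν V y k = PD.zero) :
    (¬ ∃ j ∈ V, j ≤ (k : ℕ)) ∨
    ((∃ j ∈ V, j ≤ (k : ℕ)) ∧ (∃ j ∈ V, (k : ℕ) < j) ∧ y k < (ν k : ℝ) ∧
      ¬ ∀ r : Fin m, (r : ℕ) < (k : ℕ) → (∀ j ∈ V, ¬((r : ℕ) < j ∧ j ≤ (k : ℕ))) →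
        y r = (ν r : ℝ)) := by
  by_cases c1 : ∃ j ∈ V, j ≤ (k : ℕ)
  · refine Or.inr ⟨c1, ?_⟩
    by_cases c2 : ∃ j ∈ V, (k : ℕ) < j
    · refine ⟨c2, ?_⟩
      by_cases c3 : y k < (ν k : ℝ)
      · refine ⟨c3, ?_⟩
        by_cases c4 : ∀ r : Fin m, (r : ℕ) < (k : ℕ) →
            (∀ j ∈ V, ¬((r : ℕ) < j ∧ j ≤ (k : ℕ))) → y r = (ν r : ℝ)
        · rw [wit_C k c1 c2 c3 c4] at hw; exact PD.noConfusion hw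
        · exact c4
      · by_cases c5 : (k : ℕ) + 1 ∈ V
        · rw [wit_E k c1 c2 c3 c5] at hw; exact PD.noConfusion hw
        · rw [wit_F k c1 c2 c3 c5] at hw; exact PD.noConfusion hw
    · rw [wit_B k c1 c2] at hw; exact PD.noConfusion hw
  · exact Or.inl c1

end WitVal

lemma wit_face (hμν : ∀ k, μ k < ν k) (hy : y ∈ ESet μ ν V) :
    y ∈ Face μ ν (wit ν V y) := by
  obtain ⟨hb, hlo, hhi, hst⟩ := hy
  intro k
  refine ⟨hb k, ?_, ?_⟩
  · intro hw
    rcases wit_eq_zero_cases k hw with c1 | ⟨c1, c2, c3, c4⟩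
    · refine hlo k fun j hj => ?_
      by_contra hle
      exact c1 ⟨j, hj, by omega⟩
    · by_contra hne
      have hmlt : (μ k : ℝ) < y k := lt_of_le_of_ne (hb k).1 (Ne.symm hne)
      apply c4
      intro r hr1 hr2 
      by_contra hr3
      have hylt : y r < (ν r : ℝ) := lt_of_le_of_ne (hb r).2 hr3
      exact hst r k hr1 hr2 hylt hmlt
  · intro hw
    rcases wit_eq_one_cases k hw with ⟨c1, c2 | ⟨c3, c5⟩⟩
    · refine hhi k fun j hj => ?_
      by_contra hle
      exact c2 ⟨j, hj, by omega⟩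
    · exact le_antisymm (hb k).2 (not_lt.1 c3)

lemma wit_reduced (hμν : ∀ k, μ k < ν k) (hy : y ∈ ESet μ ν V) :
    Reduced (wit ν V y) := by
  obtain ⟨hb, hlo, hhi, hst⟩ := hy
  intro q hq h12
  obtain ⟨h1, h2⟩ := h12
  set k : Fin m := ⟨q, Nat.lt_of_succ_lt hq⟩ with hkdef
  set k' : Fin m := ⟨q + 1, hq⟩ with hk'def
  obtain ⟨c1, hone⟩ := wit_eq_one_cases k h1
  rcases wit_eq_zero_cases k' h2 with d1 | ⟨d1, d2, d3, d4⟩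
  · obtain ⟨j, hj, hjq⟩ := c1
    have hjq' : j ≤ q := hjq
    exact d1 ⟨j, hj, show j ≤ q + 1 by omega⟩
  · rcases hone with c2 | ⟨c3, c5⟩
    · obtain ⟨j, hj, hjq⟩ := d2
      have hjq' : q + 1 < j := hjq
      exact c2 ⟨j, hj, show q < j by omega⟩
    · -- y k = ν k
      have hykν : y k = (ν k : ℝ) := le_antisymm (hb k).2 (not_lt.1 c3)
      apply d4
      intro r hr1 hr2
      by_contra hr3
      have hylt : y r < (ν r : ℝ) := lt_of_le_of_ne (hb r).2 hr3
      have hrq : (r : ℕ) ≤ q := by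
        have hh : (r : ℕ) < q + 1 := hr1
        omega
      rcases Nat.lt_or_ge (r : ℕ) q with hrlt | hrge
      · refine hst r k hrlt ?_ hylt ?_
        · intro j hj hcon
          have hj1' : (r : ℕ) < j := hcon.1
          have hj2' : j ≤ q := hcon.2
          exact hr2 j hj ⟨hj1', show j ≤ q + 1 by omega⟩
        · rw [hykν]
          exact_mod_cast hμν k
      · have hrk : r = k := Fin.ext (show (r : ℕ) = q by omega)
        rw [hrk, hykν] at hr3
        exact hr3 rfl

lemma wit_cutset (hμν : ∀ k, μ k < ν k) (hy : y ∈ ESet μ ν V)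
    (hVm : ∀ j ∈ V, j ≤ m) (hne : V.Nonempty) : cutset (wit ν V y) = V := by
  obtain ⟨hb, hlo, hhi, hst⟩ := hy
  ext q
  rw [mem_cutset]
  constructor
  · rintro ⟨hqm, hc1, hc2⟩
    by_contra hqV
    obtain ⟨j₀, hj₀⟩ := hne
    by_cases E1 : ∃ j ∈ V, j ≤ q
    · by_cases E2 : ∃ j ∈ V, q < j
      · -- interior fake cut
        obtain ⟨ja, hja, hjaq⟩ := E1
        obtain ⟨jb, hjb, hjbq⟩ := E2
        have hja' : ja < q := lt_of_le_of_ne hjaq (fun he => hqV (he ▸ hja))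
        have hq1 : 1 ≤ q := by omega
        have hqm' : q < m := by
          have := hVm jb hjb
          omega
        set k : Fin m := ⟨q - 1, by omega⟩ with hkdef
        set k' : Fin m := ⟨q, hqm'⟩ with hk'def
        have hco : Dx (wit ν V y) (q - 1) ≠ PD.one := by
          rcases hc1 with h0 | hx
          · omega
          · exact hx
        rw [Dx_lt _ (show q - 1 < m by omega)] at hco
        have hcq := hc2
        rw [Dx_lt _ hqm'] at hcq
        have hE1k : ∃ j ∈ V, j ≤ (k : ℕ) := ⟨ja, hja, show ja ≤ q - 1 by omega⟩
        have hE2k : ∃ j ∈ V, (k : ℕ) < j := ⟨jb, hjb, show q - 1 < jb by omega⟩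
        have hE1k' : ∃ j ∈ V, j ≤ (k' : ℕ) := ⟨ja, hja, show ja ≤ q by omega⟩
        have hE2k' : ∃ j ∈ V, (k' : ℕ) < j := ⟨jb, hjb, show q < jb from hjbq⟩
        -- step 1 : y (q-1) < ν (q-1)
        have hyk : y k < (ν k : ℝ) := by
          by_contra hge
          apply hco
          exact wit_F k hE1k hE2k hge
            (show ¬ (q - 1) + 1 ∈ V by rw [Nat.sub_add_cancel hq1]; exact hqV)
        -- step 2 : look at position q
        by_cases hyq : y k' < (ν k' : ℝ)
        · apply hcq
          refine wit_D k' hE1k' hE2k' hyq fun hall => ?_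
          have := hall k (show (k : ℕ) < (k' : ℕ) by show q - 1 < q; omega)
            (fun j hj hcon => by
              have hx1 : q - 1 < j := hcon.1
              have hx2 : j ≤ q := hcon.2
              have hje : j = q := by omega
              exact absurd (hje ▸ hj) hqV)
          exact (ne_of_lt hyk) this
        · -- y q = ν q : staircase contradiction between q-1 and q
          have hyq' : y k' = (ν k' : ℝ) := le_antisymm (hb k').2 (not_lt.1 hyq)
          refine hst k k' (show q - 1 < q by omega) (fun j hj hcon => ?_) hyk ?_
          · have hx1 : q - 1 < j := hcon.1
            have hx2 : j ≤ q := hcon.2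
            have hje : j = q := by omega
            exact absurd (hje ▸ hj) hqV
          · rw [hyq']
            exact_mod_cast hμν k'
      · -- all cuts < q : position q-1 has value one, contradicting hc1
        have hlt : ∀ j ∈ V, j < q := by
          intro j hj
          have h1 : ¬ q < j := fun hx => E2 ⟨j, hj, hx⟩
          have h2 : j ≠ q := fun he => hqV (he ▸ hj)
          omega
        obtain ⟨ja, hja, -⟩ := E1
        have hja' : ja < q := hlt ja hja
        have hq1 : 1 ≤ q := by omega
        have hjam : ja ≤ m := hVm ja hja
        rcases hc1 with h0 | hx
        · omega
        apply hx
        rw [Dx_lt _ (show q - 1 < m by omega)]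
        refine wit_B _ ⟨ja, hja, show ja ≤ q - 1 by omega⟩ ?_
        rintro ⟨j, hj, hjq⟩
        have hx1 : q - 1 < j := hjq
        have hx2 := hlt j hj
        omega
    · -- no cut ≤ q : value at q is zero, contradicting hc2
      apply hc2
      have hqm' : q < m := by
        have h1 := hVm j₀ hj₀
        have h2 : q < j₀ := by
          rcases Nat.lt_or_ge q j₀ with hx | hx
          · exact hx
          · exact absurd ⟨j₀, hj₀, hx⟩ E1
        omega
      rw [Dx_lt _ hqm']
      refine wit_A _ ?_
      rintro ⟨j, hj, hjq⟩
      exact E1 ⟨j, hj, hjq⟩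
  · intro hqV
    refine ⟨hVm q hqV, ?_, ?_⟩
    · rcases Nat.eq_zero_or_pos q with h0 | h0
      · exact Or.inl h0
      refine Or.inr ?_
      rw [Dx_lt _ (show q - 1 < m by
        have := hVm q hqV
        omega)]
      intro hcon
      obtain ⟨c1, hone⟩ := wit_eq_one_cases _ hcon
      rcases hone with c2 | ⟨c3, c5⟩
      · exact c2 ⟨q, hqV, show q - 1 < q by omega⟩
      · exact c5 (show (q - 1) + 1 ∈ V by rw [Nat.sub_add_cancel h0]; exact hqV)
    · rcases Nat.lt_or_ge q m with hqm' | hqm'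
      · rw [Dx_lt _ hqm']
        intro hcon
        rcases wit_eq_zero_cases _ hcon with c1 | ⟨c1, c2, c3, c4⟩
        · exact c1 ⟨q, hqV, le_rfl⟩
        · exact c4 fun r hr1 hr2 => absurd ⟨hr1, le_rfl⟩ (hr2 q hqV)
      · rw [Dx_ge _ hqm']
        exact fun hcon => PD.noConfusion hcon

lemma UF_class_eq (hμν : ∀ k, μ k < ν k) (hVm : ∀ j ∈ V, j ≤ m) (hne : V.Nonempty) :
    UF μ ν {δ | Reduced δ ∧ cutset δ = V} = ESet μ ν V := by
  apply Set.Subset.antisymm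
  · intro y hy
    simp only [UF, Set.mem_iUnion] at hy
    obtain ⟨δ, ⟨hred, hcut⟩, hyF⟩ := hy
    exact hcut ▸ face_subset_E hred hyF
  · intro y hy
    simp only [UF, Set.mem_iUnion]
    exact ⟨wit ν V y, ⟨wit_reduced hμν hy, wit_cutset hμν hy hVm hne⟩, wit_face hμν hy⟩

end Geometry
end S11

namespace S11
variable {m : ℕ}

def vtx (m : ℕ) (j : ℕ) : Fin m → PD := fun k => if (k : ℕ) < j then PD.zero else PD.one

noncomputable def Pt (μ ν : Fin m → ℤ) (j : ℕ) : Fin m → ℝ :=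
  fun k => if (k : ℕ) < j then (μ k : ℝ) else (ν k : ℝ)

lemma vtx_reduced (j : ℕ) : Reduced (vtx m j) := by
  intro q hq h12
  obtain ⟨h1, h2⟩ := h12
  unfold vtx at h1 h2
  split_ifs at h1 h2 with a1 a2 <;>
    first
      | exact PD.noConfusion h1
      | exact PD.noConfusion h2
      | (exfalso
         have b1 : ¬ q < j := a1
         have b2 : q + 1 < j := a2
         omega)

lemma vtx_stars (j : ℕ) : stars (vtx m j) = 0 := by
  rw [stars, Finset.card_eq_zero, Finset.filter_eq_empty_iff]
  intro k _
  unfold vtx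
  split_ifs <;> simp

lemma rv_iff {δ : Fin m → PD} : RV δ ↔ ∃ j ≤ m, δ = vtx m j := by
  constructor
  · rintro ⟨hred, hs⟩
    have hnostar : ∀ k : Fin m, ¬ δ k = PD.star := by
      intro k
      have := Finset.card_eq_zero.1 hs
      rw [Finset.filter_eq_empty_iff] at this
      exact this (Finset.mem_univ k)
    have hD : ∀ p, Dx δ p ≠ PD.star := by
      intro p
      rcases lt_or_ge p m with hlt | hge
      · rw [Dx_lt δ hlt]; exact hnostar _
      · rw [Dx_ge δ hge]; simp
    have hB : ¬ ∃ p, p + 1 < m ∧ Dx δ p = PD.one ∧ Dx δ (p+1) = PD.star := by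
      rintro ⟨p, -, -, hx⟩
      exact hD (p+1) hx
    have hex : ∃ p, Dx δ p ≠ PD.zero := ⟨m, by rw [Dx_ge δ le_rfl]; simp⟩
    classical
    refine ⟨Nat.find hex, Nat.find_min' hex (by rw [Dx_ge δ le_rfl]; simp), ?_⟩
    funext k
    by_cases hkj : (k : ℕ) < Nat.find hex
    · have := Nat.find_min hex hkj
      rw [not_not] at this
      rw [Dx_lt δ k.isLt, Fin.eta] at this
      rw [this]
      unfold vtx
      rw [if_pos hkj]
    · have hspec := Nat.find_spec hex
      cases val : Dx δ (Nat.find hex) with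
      | zero => exact absurd val hspec
      | star => exact absurd val (hD _)
      | one =>
        have := ones_up hred hB (Nat.find hex) (k : ℕ) val (by omega)
        rw [Dx_lt δ k.isLt, Fin.eta] at this
        rw [this]
        unfold vtx
        rw [if_neg hkj]
  · rintro ⟨j, hjm, rfl⟩
    exact ⟨vtx_reduced j, vtx_stars j⟩

lemma vtx_inj {j j' : ℕ} (hj : j ≤ m) (hj' : j' ≤ m) (he : vtx m j = vtx m j') :
    j = j' := by
  have key : ∀ a b : ℕ, a < b → b ≤ m → vtx m a ≠ vtx m b := by
    intro a b hab hbm hcon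
    have := congrFun hcon ⟨a, by omega⟩
    unfold vtx at this
    rw [if_neg (show ¬ (a : ℕ) < a by omega), if_pos (show (a : ℕ) < b from hab)] at this
    exact PD.noConfusion this
  rcases Nat.lt_trichotomy j j' with hlt | heq | hgt
  · exact absurd he (key j j' hlt hj')
  · exact heq
  · exact absurd he.symm (key j' j hgt hj)

section Geometry2
variable {μ ν : Fin m → ℤ}

lemma face_vtx (hμν : ∀ k, μ k < ν k) (j : ℕ) :
    Face μ ν (vtx m j) = {Pt μ ν j} := by
  ext y
  simp only [Set.mem_singleton_iff]
  constructor
  · intro hy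
    funext k
    unfold Pt
    by_cases hk : (k : ℕ) < j
    · rw [if_pos hk]
      exact (hy k).2.1 (by unfold vtx; rw [if_pos hk])
    · rw [if_neg hk]
      exact (hy k).2.2 (by unfold vtx; rw [if_neg hk])
  · rintro rfl
    intro k
    refine ⟨?_, ?_, ?_⟩
    · unfold Pt
      split_ifs with hk
      · exact ⟨le_rfl, by exact_mod_cast (hμν k).le⟩
      · exact ⟨by exact_mod_cast (hμν k).le, le_rfl⟩
    · intro hz
      unfold vtx at hz
      unfold Pt
      split_ifs at hz ⊢ with hk <;> first | rfl | exact PD.noConfusion hz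
    · intro hz
      unfold vtx at hz
      unfold Pt
      split_ifs at hz ⊢ with hk <;> first | rfl | exact PD.noConfusion hz

lemma Pt_mem_E (hμν : ∀ k, μ k < ν k) {V : Finset ℕ} {j : ℕ} (hj : j ∈ V) :
    Pt μ ν j ∈ ESet μ ν V := by
  refine ⟨?_, ?_, ?_, ?_⟩
  · intro k
    unfold Pt
    split_ifs with hk
    · exact ⟨le_rfl, by exact_mod_cast (hμν k).le⟩
    · exact ⟨by exact_mod_cast (hμν k).le, le_rfl⟩
  · intro k hk
    unfold Pt
    rw [if_pos (hk j hj)]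
  · intro k hk
    unfold Pt
    rw [if_neg (by have := hk j hj; omega)]
  · intro k k' hlt hnc h1 h2
    have hkj : (k : ℕ) < j := by
      by_contra hc
      unfold Pt at h1
      rw [if_neg hc] at h1
      exact lt_irrefl _ h1
    have hk'j : j ≤ (k' : ℕ) := by
      by_contra hc
      unfold Pt at h2
      rw [if_pos (by omega)] at h2
      exact lt_irrefl _ h2
    exact hnc j hj ⟨hkj, hk'j⟩

lemma mem_of_Pt_mem (hμν : ∀ k, μ k < ν k) {V : Finset ℕ} (hVm : ∀ j' ∈ V, j' ≤ m)
    (hne : V.Nonempty) {j : ℕ} (hjm : j ≤ m) (hy : Pt μ ν j ∈ ESet μ ν V) : j ∈ V := by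
  by_contra hjV
  obtain ⟨hb, hlo, hhi, hst⟩ := hy
  by_cases E1 : ∃ j' ∈ V, j' ≤ j
  · by_cases E2 : ∃ j' ∈ V, j < j'
    · obtain ⟨ja, hja, hjaq⟩ := E1
      obtain ⟨jb, hjb, hjbq⟩ := E2
      have hja' : ja < j := lt_of_le_of_ne hjaq (fun he => hjV (he ▸ hja))
      have h1 : 1 ≤ j := by omega
      have hjm' : j < m := by
        have := hVm jb hjb
        omega
      refine hst ⟨j - 1, by omega⟩ ⟨j, hjm'⟩ (show j - 1 < j by omega)
        (fun j' hj' hcon => ?_) ?_ ?_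
      · have hx1 : j - 1 < j' := hcon.1
        have hx2 : j' ≤ j := hcon.2
        have hje : j' = j := by omega
        exact hjV (hje ▸ hj')
      · show Pt μ ν j ⟨j - 1, by omega⟩ < _
        unfold Pt
        rw [if_pos (show j - 1 < j by omega)]
        exact_mod_cast hμν _
      · show _ < Pt μ ν j ⟨j, hjm'⟩
        unfold Pt
        rw [if_neg (show ¬ (j : ℕ) < j by omega)]
        exact_mod_cast hμν _
    · have hlt : ∀ j' ∈ V, j' < j := by
        intro j' hj'
        have hn1 : ¬ j < j' := fun hx => E2 ⟨j', hj', hx⟩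
        have hn2 : j' ≠ j := fun he => hjV (he ▸ hj')
        omega
      obtain ⟨ja, hja, -⟩ := E1
      have hja' : ja < j := hlt ja hja
      have h1 : 1 ≤ j := by omega
      have hthis := hhi ⟨j - 1, by omega⟩
        (fun j' hj' => show j' ≤ j - 1 by have := hlt j' hj'; omega)
      unfold Pt at hthis
      rw [if_pos (show j - 1 < j by omega)] at hthis
      exact absurd hthis (ne_of_lt (by exact_mod_cast hμν _))
  · obtain ⟨jb, hjb⟩ := hne
    have hgt : j < jb := by
      rcases Nat.lt_or_ge j jb with hx | hx
      · exact hx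
      · exact absurd ⟨jb, hjb, hx⟩ E1
    have hjm' : j < m := by
      have := hVm jb hjb
      omega
    have hthis := hlo ⟨j, hjm'⟩ (fun j' hj' => by
      rcases Nat.lt_or_ge j j' with hx | hx
      · exact hx
      · exact absurd ⟨j', hj', hx⟩ E1)
    unfold Pt at hthis
    rw [if_neg (show ¬ (j : ℕ) < j by omega)] at hthis
    exact absurd hthis.symm (ne_of_lt (by exact_mod_cast hμν _))

lemma vset_class (hμν : ∀ k, μ k < ν k) {V : Finset ℕ} (hVm : ∀ j ∈ V, j ≤ m)
    (hne : V.Nonempty) :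
    vset μ ν {δ | Reduced δ ∧ cutset δ = V} = {δ' | ∃ j ∈ V, δ' = vtx m j} := by
  ext δ'
  simp only [vset, Set.mem_setOf_eq]
  rw [UF_class_eq hμν hVm hne]
  constructor
  · rintro ⟨hrv, hsub⟩
    obtain ⟨j, hjm, rfl⟩ := rv_iff.1 hrv
    have hPt : Pt μ ν j ∈ ESet μ ν V := by
      apply hsub
      rw [face_vtx hμν]
      exact rfl
    exact ⟨j, mem_of_Pt_mem hμν hVm hne hjm hPt, rfl⟩
  · rintro ⟨j, hj, rfl⟩
    refine ⟨rv_iff.2 ⟨j, hVm j hj, rfl⟩, ?_⟩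
    rw [face_vtx hμν]
    intro z hz
    rw [Set.mem_singleton_iff] at hz
    subst hz
    exact Pt_mem_E hμν hj

end Geometry2
end S11

namespace S11
variable {m : ℕ}

section Inter
variable {μ ν : Fin m → ℤ} {V W : Finset ℕ} {y : Fin m → ℝ}

lemma E_mono {V W : Finset ℕ} (hVW : V ⊆ W) : ESet μ ν V ⊆ ESet μ ν W := by
  rintro y ⟨hb, hlo, hhi, hst⟩
  refine ⟨hb, ?_, ?_, ?_⟩
  · exact fun k hk => hlo k fun j hj => hk j (hVW hj)
  · exact fun k hk => hhi k fun j hj => hk j (hVW hj)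
  · exact fun k k' hlt hnc => hst k k' hlt fun j hj => hnc j (hVW hj)

lemma E_empty (hμν : ∀ k, μ k < ν k) (hm : 1 ≤ m) :
    ESet μ ν (∅ : Finset ℕ) = (∅ : Set (Fin m → ℝ)) := by
  ext y
  simp only [Set.mem_empty_iff_false, iff_false]
  rintro ⟨hb, hlo, hhi, hst⟩
  have h1 := hlo ⟨0, hm⟩ (by simp)
  have h2 := hhi ⟨0, hm⟩ (by simp)
  rw [h1] at h2
  have := hμν ⟨0, hm⟩
  rw [show ((⟨0, hm⟩ : Fin m)) = ⟨0, hm⟩ from rfl] at this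
  exact absurd h2 (ne_of_lt (by exact_mod_cast this))

lemma lemA (hμν : ∀ k, μ k < ν k) (hyV : y ∈ ESet μ ν V) (hyW : y ∈ ESet μ ν W) :
    ∀ p, ∀ hp : p < m, (μ ⟨p, hp⟩ : ℝ) < y ⟨p, hp⟩ → ∃ j, j ∈ V ∧ j ∈ W ∧ j ≤ p := by
  intro p
  induction p using Nat.strong_induction_on with
  | h p ih =>
    intro hp hyp
    have hVex : ∃ j ∈ V, j ≤ p := by
      by_contra hc
      push_neg at hc
      rw [hyV.2.1 ⟨p, hp⟩ (fun j hj => hc j hj)] at hyp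
      exact lt_irrefl _ hyp
    have hWex : ∃ j ∈ W, j ≤ p := by
      by_contra hc
      push_neg at hc
      rw [hyW.2.1 ⟨p, hp⟩ (fun j hj => hc j hj)] at hyp
      exact lt_irrefl _ hyp
    have hFVne : (V.filter (fun x => x ≤ p)).Nonempty := by
      obtain ⟨j, hj, hjp⟩ := hVex
      exact ⟨j, Finset.mem_filter.2 ⟨hj, hjp⟩⟩
    have hFWne : (W.filter (fun x => x ≤ p)).Nonempty := by
      obtain ⟨j, hj, hjp⟩ := hWex
      exact ⟨j, Finset.mem_filter.2 ⟨hj, hjp⟩⟩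
    set dV := (V.filter (fun x => x ≤ p)).max' hFVne with hdVdef
    set dW := (W.filter (fun x => x ≤ p)).max' hFWne with hdWdef
    have hdV : dV ∈ V ∧ dV ≤ p := by
      have := (V.filter (fun x => x ≤ p)).max'_mem hFVne
      rw [Finset.mem_filter] at this
      exact this
    have hdW : dW ∈ W ∧ dW ≤ p := by
      have := (W.filter (fun x => x ≤ p)).max'_mem hFWne
      rw [Finset.mem_filter] at this
      exact this
    have hdVmax : ∀ j ∈ V, j ≤ p → j ≤ dV := fun j hj hjp =>
      Finset.le_max' (V.filter (fun x => x ≤ p)) j (Finset.mem_filter.2 ⟨hj, hjp⟩)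
    have hdWmax : ∀ j ∈ W, j ≤ p → j ≤ dW := fun j hj hjp =>
      Finset.le_max' (W.filter (fun x => x ≤ p)) j (Finset.mem_filter.2 ⟨hj, hjp⟩)
    rcases Nat.lt_trichotomy dV dW with hlt | heq | hgt
    · -- dV < dW : recurse at dW - 1 using staircase of V
      have h1 : 1 ≤ dW := by omega
      have hp' : dW - 1 < m := by omega
      have hynu : y ⟨dW - 1, hp'⟩ = (ν ⟨dW - 1, hp'⟩ : ℝ) := by
        by_contra hne
        have hlt' : y ⟨dW - 1, hp'⟩ < (ν ⟨dW - 1, hp'⟩ : ℝ) :=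
          lt_of_le_of_ne (hyV.1 _).2 hne
        have hlt2 : dW - 1 < p := by omega
        refine hyV.2.2.2 ⟨dW - 1, hp'⟩ ⟨p, hp⟩ hlt2 (fun j hj hcon => ?_) hlt' hyp
        have hx1 : dW - 1 < j := hcon.1
        have hx2 : j ≤ p := hcon.2
        have := hdVmax j hj hx2
        omega
      have hm' : (μ ⟨dW - 1, hp'⟩ : ℝ) < y ⟨dW - 1, hp'⟩ := by
        rw [hynu]
        exact_mod_cast hμν _
      obtain ⟨j, hjV, hjW, hjle⟩ := ih (dW - 1) (by omega) hp' hm'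
      exact ⟨j, hjV, hjW, by omega⟩
    · exact ⟨dV, hdV.1, heq ▸ hdW.1, hdV.2⟩
    · -- dW < dV : recurse at dV - 1 using staircase of W
      have h1 : 1 ≤ dV := by omega
      have hp' : dV - 1 < m := by omega
      have hynu : y ⟨dV - 1, hp'⟩ = (ν ⟨dV - 1, hp'⟩ : ℝ) := by
        by_contra hne
        have hlt' : y ⟨dV - 1, hp'⟩ < (ν ⟨dV - 1, hp'⟩ : ℝ) :=
          lt_of_le_of_ne (hyW.1 _).2 hne
        have hlt2 : dV - 1 < p := by omega
        refine hyW.2.2.2 ⟨dV - 1, hp'⟩ ⟨p, hp⟩ hlt2 (fun j hj hcon => ?_) hlt' hyp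
        have hx1 : dV - 1 < j := hcon.1
        have hx2 : j ≤ p := hcon.2
        have := hdWmax j hj hx2
        omega
      have hm' : (μ ⟨dV - 1, hp'⟩ : ℝ) < y ⟨dV - 1, hp'⟩ := by
        rw [hynu]
        exact_mod_cast hμν _
      obtain ⟨j, hjV, hjW, hjle⟩ := ih (dV - 1) (by omega) hp' hm'
      exact ⟨j, hjV, hjW, by omega⟩

lemma lemB (hμν : ∀ k, μ k < ν k) (hVm : ∀ j ∈ V, j ≤ m) (hWm : ∀ j ∈ W, j ≤ m)
    (hyV : y ∈ ESet μ ν V) (hyW : y ∈ ESet μ ν W) :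
    ∀ n p, m - p ≤ n → ∀ hp : p < m, y ⟨p, hp⟩ < (ν ⟨p, hp⟩ : ℝ) →
      ∃ j, j ∈ V ∧ j ∈ W ∧ p < j := by
  intro n
  induction n with
  | zero => intro p hfuel hp; exact absurd hfuel (by omega)
  | succ n ih =>
    intro p hfuel hp hyp
    have hVex : ∃ j ∈ V, p < j := by
      by_contra hc
      push_neg at hc
      rw [hyV.2.2.1 ⟨p, hp⟩ (fun j hj => hc j hj)] at hyp
      exact lt_irrefl _ hyp
    have hWex : ∃ j ∈ W, p < j := by
      by_contra hc
      push_neg at hc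
      rw [hyW.2.2.1 ⟨p, hp⟩ (fun j hj => hc j hj)] at hyp
      exact lt_irrefl _ hyp
    have hFVne : (V.filter (fun x => p < x)).Nonempty := by
      obtain ⟨j, hj, hjp⟩ := hVex
      exact ⟨j, Finset.mem_filter.2 ⟨hj, hjp⟩⟩
    have hFWne : (W.filter (fun x => p < x)).Nonempty := by
      obtain ⟨j, hj, hjp⟩ := hWex
      exact ⟨j, Finset.mem_filter.2 ⟨hj, hjp⟩⟩
    set cV := (V.filter (fun x => p < x)).min' hFVne with hcVdef
    set cW := (W.filter (fun x => p < x)).min' hFWne with hcWdef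
    have hcV : cV ∈ V ∧ p < cV := by
      have := (V.filter (fun x => p < x)).min'_mem hFVne
      rw [Finset.mem_filter] at this
      exact this
    have hcW : cW ∈ W ∧ p < cW := by
      have := (W.filter (fun x => p < x)).min'_mem hFWne
      rw [Finset.mem_filter] at this
      exact this
    have hcVmin : ∀ j ∈ V, p < j → cV ≤ j := fun j hj hjp =>
      Finset.min'_le (V.filter (fun x => p < x)) j (Finset.mem_filter.2 ⟨hj, hjp⟩)
    have hcWmin : ∀ j ∈ W, p < j → cW ≤ j := fun j hj hjp =>
      Finset.min'_le (W.filter (fun x => p < x)) j (Finset.mem_filter.2 ⟨hj, hjp⟩)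
    rcases Nat.lt_trichotomy cV cW with hlt | heq | hgt
    · have hcVm : cV < m := by
        have := hWm cW hcW.1
        omega
      have hymu : y ⟨cV, hcVm⟩ = (μ ⟨cV, hcVm⟩ : ℝ) := by
        by_contra hne
        have hlt' : (μ ⟨cV, hcVm⟩ : ℝ) < y ⟨cV, hcVm⟩ :=
          lt_of_le_of_ne (hyW.1 _).1 (Ne.symm hne)
        refine hyW.2.2.2 ⟨p, hp⟩ ⟨cV, hcVm⟩ hcV.2 (fun j hj hcon => ?_) hyp hlt'
        have hx1 : p < j := hcon.1
        have hx2 : j ≤ cV := hcon.2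
        have := hcWmin j hj hx1
        omega
      have hylt : y ⟨cV, hcVm⟩ < (ν ⟨cV, hcVm⟩ : ℝ) := by
        rw [hymu]
        exact_mod_cast hμν _
      obtain ⟨j, h1, h2, h3⟩ := ih cV (by omega) hcVm hylt
      exact ⟨j, h1, h2, by omega⟩
    · exact ⟨cV, hcV.1, heq ▸ hcW.1, hcV.2⟩
    · have hcWm : cW < m := by
        have := hVm cV hcV.1
        omega
      have hymu : y ⟨cW, hcWm⟩ = (μ ⟨cW, hcWm⟩ : ℝ) := by
        by_contra hne
        have hlt' : (μ ⟨cW, hcWm⟩ : ℝ) < y ⟨cW, hcWm⟩ :=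
          lt_of_le_of_ne (hyV.1 _).1 (Ne.symm hne)
        refine hyV.2.2.2 ⟨p, hp⟩ ⟨cW, hcWm⟩ hcW.2 (fun j hj hcon => ?_) hyp hlt'
        have hx1 : p < j := hcon.1
        have hx2 : j ≤ cW := hcon.2
        have := hcVmin j hj hx1
        omega
      have hylt : y ⟨cW, hcWm⟩ < (ν ⟨cW, hcWm⟩ : ℝ) := by
        rw [hymu]
        exact_mod_cast hμν _
      obtain ⟨j, h1, h2, h3⟩ := ih cW (by omega) hcWm hylt
      exact ⟨j, h1, h2, by omega⟩

lemma lemC (hμν : ∀ k, μ k < ν k)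
    (hyV : y ∈ ESet μ ν V) (hyW : y ∈ ESet μ ν W) :
    ∀ n p p', p' - p ≤ n → p < p' → ∀ (hp : p < m) (hp' : p' < m),
      y ⟨p, hp⟩ < (ν ⟨p, hp⟩ : ℝ) → (μ ⟨p', hp'⟩ : ℝ) < y ⟨p', hp'⟩ →
      ∃ j, j ∈ V ∧ j ∈ W ∧ p < j ∧ j ≤ p' := by
  intro n
  induction n with
  | zero => intro p p' h1 h2; exact absurd h1 (by omega)
  | succ n ih =>
    intro p p' hfuel hpp hp hp' hyp hyp'
    have hVex : ∃ j ∈ V, p < j ∧ j ≤ p' := by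
      by_contra hc
      exact hyV.2.2.2 ⟨p, hp⟩ ⟨p', hp'⟩ hpp (fun j hj hcon => hc ⟨j, hj, hcon⟩) hyp hyp'
    have hWex : ∃ j ∈ W, p < j ∧ j ≤ p' := by
      by_contra hc
      exact hyW.2.2.2 ⟨p, hp⟩ ⟨p', hp'⟩ hpp (fun j hj hcon => hc ⟨j, hj, hcon⟩) hyp hyp'
    have hFVne : (V.filter (fun x => p < x)).Nonempty := by
      obtain ⟨j, hj, hjp, -⟩ := hVex
      exact ⟨j, Finset.mem_filter.2 ⟨hj, hjp⟩⟩
    have hFWne : (W.filter (fun x => p < x)).Nonempty := by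
      obtain ⟨j, hj, hjp, -⟩ := hWex
      exact ⟨j, Finset.mem_filter.2 ⟨hj, hjp⟩⟩
    set cV := (V.filter (fun x => p < x)).min' hFVne with hcVdef
    set cW := (W.filter (fun x => p < x)).min' hFWne with hcWdef
    have hcV : cV ∈ V ∧ p < cV := by
      have := (V.filter (fun x => p < x)).min'_mem hFVne
      rw [Finset.mem_filter] at this
      exact this
    have hcW : cW ∈ W ∧ p < cW := by
      have := (W.filter (fun x => p < x)).min'_mem hFWne
      rw [Finset.mem_filter] at this
      exact this
    have hcVmin : ∀ j ∈ V, p < j → cV ≤ j := fun j hj hjp =>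
      Finset.min'_le (V.filter (fun x => p < x)) j (Finset.mem_filter.2 ⟨hj, hjp⟩)
    have hcWmin : ∀ j ∈ W, p < j → cW ≤ j := fun j hj hjp =>
      Finset.min'_le (W.filter (fun x => p < x)) j (Finset.mem_filter.2 ⟨hj, hjp⟩)
    have hcVle : cV ≤ p' := by
      obtain ⟨j, hj, hjp, hjp'⟩ := hVex
      exact le_trans (hcVmin j hj hjp) hjp'
    have hcWle : cW ≤ p' := by
      obtain ⟨j, hj, hjp, hjp'⟩ := hWex
      exact le_trans (hcWmin j hj hjp) hjp'
    rcases Nat.lt_trichotomy cV cW with hlt | heq | hgt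
    · have hcVm : cV < m := by omega
      have hymu : y ⟨cV, hcVm⟩ = (μ ⟨cV, hcVm⟩ : ℝ) := by
        by_contra hne
        have hlt' : (μ ⟨cV, hcVm⟩ : ℝ) < y ⟨cV, hcVm⟩ :=
          lt_of_le_of_ne (hyW.1 _).1 (Ne.symm hne)
        refine hyW.2.2.2 ⟨p, hp⟩ ⟨cV, hcVm⟩ hcV.2 (fun j hj hcon => ?_) hyp hlt'
        have hx1 : p < j := hcon.1
        have hx2 : j ≤ cV := hcon.2
        have := hcWmin j hj hx1
        omega
      have hylt : y ⟨cV, hcVm⟩ < (ν ⟨cV, hcVm⟩ : ℝ) := by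
        rw [hymu]
        exact_mod_cast hμν _
      obtain ⟨j, h1, h2, h3, h4⟩ := ih cV p' (by omega) (by omega) hcVm hp' hylt hyp'
      exact ⟨j, h1, h2, by omega, h4⟩
    · exact ⟨cV, hcV.1, heq ▸ hcW.1, hcV.2, hcVle⟩
    · have hcWm : cW < m := by omega
      have hymu : y ⟨cW, hcWm⟩ = (μ ⟨cW, hcWm⟩ : ℝ) := by
        by_contra hne
        have hlt' : (μ ⟨cW, hcWm⟩ : ℝ) < y ⟨cW, hcWm⟩ :=
          lt_of_le_of_ne (hyV.1 _).1 (Ne.symm hne)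
        refine hyV.2.2.2 ⟨p, hp⟩ ⟨cW, hcWm⟩ hcW.2 (fun j hj hcon => ?_) hyp hlt'
        have hx1 : p < j := hcon.1
        have hx2 : j ≤ cW := hcon.2
        have := hcVmin j hj hx1
        omega
      have hylt : y ⟨cW, hcWm⟩ < (ν ⟨cW, hcWm⟩ : ℝ) := by
        rw [hymu]
        exact_mod_cast hμν _
      obtain ⟨j, h1, h2, h3, h4⟩ := ih cW p' (by omega) (by omega) hcWm hp' hylt hyp'
      exact ⟨j, h1, h2, by omega, h4⟩

lemma E_inter (hμν : ∀ k, μ k < ν k) (hVm : ∀ j ∈ V, j ≤ m) (hWm : ∀ j ∈ W, j ≤ m) :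
    ESet μ ν V ∩ ESet μ ν W = ESet μ ν (V ∩ W) := by
  apply Set.Subset.antisymm
  · rintro y ⟨hyV, hyW⟩
    refine ⟨hyV.1, ?_, ?_, ?_⟩
    · intro k hk
      by_contra hne
      have hlt' : (μ k : ℝ) < y k := lt_of_le_of_ne (hyV.1 k).1 (Ne.symm hne)
      obtain ⟨j, hjV, hjW, hjle⟩ := lemA hμν hyV hyW (k : ℕ) k.isLt hlt'
      exact absurd (hk j (Finset.mem_inter.2 ⟨hjV, hjW⟩)) (by omega)
    · intro k hk
      by_contra hne
      have hlt' : y k < (ν k : ℝ) := lt_of_le_of_ne (hyV.1 k).2 hne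
      obtain ⟨j, hjV, hjW, hjgt⟩ := lemB hμν hVm hWm hyV hyW (m - (k : ℕ)) (k : ℕ)
        le_rfl k.isLt hlt'
      exact absurd (hk j (Finset.mem_inter.2 ⟨hjV, hjW⟩)) (by omega)
    · intro k k' hlt hnc h1 h2
      obtain ⟨j, hjV, hjW, hj1, hj2⟩ := lemC hμν hyV hyW ((k' : ℕ) - (k : ℕ))
        (k : ℕ) (k' : ℕ) le_rfl hlt k.isLt k'.isLt h1 h2
      exact hnc j (Finset.mem_inter.2 ⟨hjV, hjW⟩) ⟨hj1, hj2⟩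
  · exact fun y hy => ⟨E_mono Finset.inter_subset_left hy, E_mono Finset.inter_subset_right hy⟩

end Inter
end S11

namespace S11

/-- clamp to [0,1] -/
noncomputable def clamp (x : ℝ) : ℝ := max 0 (min 1 x)

lemma clamp_of_nonpos {x : ℝ} (h : x ≤ 0) : clamp x = 0 := by
  unfold clamp
  rw [min_eq_right (le_trans h zero_le_one), max_eq_left h]

lemma clamp_of_one_le {x : ℝ} (h : 1 ≤ x) : clamp x = 1 := by
  unfold clamp
  rw [min_eq_left h, max_eq_right zero_le_one]

lemma clamp_of_mem {x : ℝ} (h0 : 0 ≤ x) (h1 : x ≤ 1) : clamp x = x := by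
  unfold clamp
  rw [min_eq_right h1, max_eq_right h0]

lemma clamp_nonneg (x : ℝ) : 0 ≤ clamp x := le_max_left _ _

lemma clamp_le_one (x : ℝ) : clamp x ≤ 1 := max_le (by norm_num) (min_le_left _ _)

lemma clamp_lt_one {x : ℝ} (h : clamp x < 1) : x < 1 := by
  by_contra hc
  rw [clamp_of_one_le (not_lt.1 hc)] at h
  exact lt_irrefl _ h

lemma clamp_continuous : Continuous clamp :=
  continuous_const.max (continuous_const.min continuous_id)

/-- summing clamps of `u - i` recovers `u`. -/
lemma clamp_sum (L : ℕ) (u : ℝ) (h0 : 0 ≤ u) (hL : u ≤ L) :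
    ∑ i ∈ Finset.range L, clamp (u - i) = u := by
  induction L with
  | zero =>
    simp only [Finset.range_zero, Finset.sum_empty]
    exact le_antisymm (by exact_mod_cast hL) h0 |>.symm ▸ rfl
  | succ L ih =>
    rw [Finset.sum_range_succ]
    rcases le_or_gt u L with hc | hc
    · rw [ih hc, clamp_of_nonpos (by exact sub_nonpos.2 hc), add_zero]
    · have hall : ∀ i ∈ Finset.range L, clamp (u - i) = 1 := by
        intro i hi
        rw [Finset.mem_range] at hi
        refine clamp_of_one_le ?_
        have : (i : ℝ) + 1 ≤ L := by exact_mod_cast hi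
        linarith
      rw [Finset.sum_congr rfl hall, Finset.sum_const, Finset.card_range, nsmul_eq_mul,
        mul_one, clamp_of_mem (by linarith) (by push_cast at hL ⊢; linarith)]
      ring
  
/-- staircase reconstruction from the sum. -/
lemma clamp_reconstruct (L : ℕ) (f : ℕ → ℝ)
    (hf01 : ∀ i, i < L → 0 ≤ f i ∧ f i ≤ 1)
    (hst : ∀ i i', i < i' → i' < L → f i < 1 → f i' = 0) :
    ∀ i, i < L → clamp ((∑ t ∈ Finset.range L, f t) - i) = f i := by
  intro i hi
  have hsplit : ∑ t ∈ Finset.range L, f t =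
      (∑ t ∈ Finset.range i, f t) + f i + (∑ t ∈ Finset.Ico (i+1) L, f t) := by
    have h1 : ∑ t ∈ Finset.range L, f t =
        (∑ t ∈ Finset.range (i+1), f t) + ∑ t ∈ Finset.Ico (i+1) L, f t := by
      rw [Finset.range_eq_Ico, ← Finset.sum_Ico_consecutive f (Nat.zero_le (i+1)) hi,
        ← Finset.range_eq_Ico]
    rw [h1, Finset.sum_range_succ]
  set A := ∑ t ∈ Finset.range i, f t with hA
  set B := ∑ t ∈ Finset.Ico (i+1) L, f t with hB
  have hA0 : 0 ≤ A := Finset.sum_nonneg fun t ht =>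
    (hf01 t (by rw [Finset.mem_range] at ht; omega)).1
  have hAle : A ≤ i := by
    calc A ≤ ∑ t ∈ Finset.range i, (1:ℝ) := Finset.sum_le_sum fun t ht =>
            (hf01 t (by rw [Finset.mem_range] at ht; omega)).2
    _ = i := by simp
  have hB0 : 0 ≤ B := Finset.sum_nonneg fun t ht =>
    (hf01 t (by rw [Finset.mem_Ico] at ht; omega)).1
  have hAfull : f i ≠ 0 → A = (i : ℝ) := by
    intro hne0
    have hone : ∀ t ∈ Finset.range i, f t = 1 := by
      intro t ht
      rw [Finset.mem_range] at ht
      by_contra hne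
      have hlt1 : f t < 1 := lt_of_le_of_ne (hf01 t (by omega)).2 hne
      exact hne0 (hst t i ht hi hlt1)
    rw [hA, Finset.sum_congr rfl hone]
    simp
  by_cases hfi : f i < 1
  · have hBz : B = 0 := Finset.sum_eq_zero fun t ht => by
      rw [Finset.mem_Ico] at ht
      exact hst i t (by omega) ht.2 hfi
    by_cases hfi0 : 0 < f i
    · rw [hsplit, hAfull (ne_of_gt hfi0), hBz]
      rw [show ((i:ℝ) + f i + 0 - i) = f i by ring]
      exact clamp_of_mem (le_of_lt hfi0) (hf01 i hi).2
    · have hfz : f i = 0 := le_antisymm (not_lt.1 hfi0) (hf01 i hi).1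
      rw [hsplit, hfz, hBz]
      rw [show (A + 0 + 0 - (i:ℝ)) = A - i by ring]
      exact clamp_of_nonpos (by linarith)
  · have hfi1 : f i = 1 := le_antisymm (hf01 i hi).2 (not_lt.1 hfi)
    rw [hsplit, hAfull (by rw [hfi1]; norm_num), hfi1]
    exact clamp_of_one_le (by linarith)

end S11

namespace S11
variable {m : ℕ}

/-- maximum of `V` (0 for empty) -/
def mx (V : Finset ℕ) : ℕ := (insert 0 V).max' (Finset.insert_nonempty 0 V)

lemma le_mx {V : Finset ℕ} {j : ℕ} (hj : j ∈ V) : j ≤ mx V := by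
  unfold mx
  exact Finset.le_max' _ j (Finset.mem_insert_of_mem hj)

lemma mx_mem {V : Finset ℕ} (hne : V.Nonempty) : mx V ∈ V := by
  have h := (insert 0 V).max'_mem (Finset.insert_nonempty 0 V)
  rw [Finset.mem_insert] at h
  rcases h with h0 | h
  · obtain ⟨v, hv⟩ := hne
    have h1 := le_mx hv
    have h0' : mx V = 0 := h0
    have hv0 : v = 0 := by omega
    rw [h0']
    rwa [← hv0]
  · exact h

/-- the next element of `V` after `j` (with fallback `m+1`). -/
def nxt (m : ℕ) (V : Finset ℕ) (j : ℕ) : ℕ :=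
  (insert (m+1) (V.filter (fun x => j < x))).min' (Finset.insert_nonempty _ _)

lemma nxt_gt {V : Finset ℕ} {j : ℕ} (hj : j ≤ m) : j < nxt m V j := by
  have h := (insert (m+1) (V.filter (fun x => j < x))).min'_mem (Finset.insert_nonempty _ _)
  rw [Finset.mem_insert] at h
  rcases h with h | h
  · unfold nxt
    omega
  · rw [Finset.mem_filter] at h
    exact h.2

lemma nxt_le {V : Finset ℕ} {j x : ℕ} (hx : x ∈ V) (hjx : j < x) : nxt m V j ≤ x := by
  unfold nxt
  exact Finset.min'_le (insert (m+1) (V.filter (fun z => j < z))) x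
    (Finset.mem_insert_of_mem (Finset.mem_filter.2 ⟨hx, hjx⟩))

lemma nxt_mem {V : Finset ℕ} (hVm : ∀ x ∈ V, x ≤ m) {j : ℕ}
    (hex : ∃ x ∈ V, j < x) : nxt m V j ∈ V := by
  obtain ⟨x, hx, hjx⟩ := hex
  have hle := nxt_le (m := m) hx hjx
  have h := (insert (m+1) (V.filter (fun x => j < x))).min'_mem (Finset.insert_nonempty _ _)
  rw [Finset.mem_insert] at h
  rcases h with h | h
  · have := hVm x hx
    unfold nxt at hle
    omega
  · rw [Finset.mem_filter] at h
    exact h.1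

/-- the previous element of `V` at or before `p` (with fallback `0`). -/
def prv (V : Finset ℕ) (p : ℕ) : ℕ :=
  (insert 0 (V.filter (fun x => x ≤ p))).max' (Finset.insert_nonempty _ _)

lemma prv_le {V : Finset ℕ} {p : ℕ} : prv V p ≤ p := by
  have h := (insert 0 (V.filter (fun x => x ≤ p))).max'_mem (Finset.insert_nonempty _ _)
  rw [Finset.mem_insert] at h
  rcases h with h | h
  · unfold prv
    omega
  · rw [Finset.mem_filter] at h
    exact h.2

lemma le_prv {V : Finset ℕ} {p x : ℕ} (hx : x ∈ V) (hxp : x ≤ p) : x ≤ prv V p := by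
  unfold prv
  exact Finset.le_max' (insert 0 (V.filter (fun z => z ≤ p))) x
    (Finset.mem_insert_of_mem (Finset.mem_filter.2 ⟨hx, hxp⟩))

lemma prv_mem {V : Finset ℕ} {p : ℕ} (hex : ∃ x ∈ V, x ≤ p) : prv V p ∈ V := by
  obtain ⟨x, hx, hxp⟩ := hex
  have hle := le_prv hx hxp
  have h := (insert 0 (V.filter (fun x => x ≤ p))).max'_mem (Finset.insert_nonempty _ _)
  rw [Finset.mem_insert] at h
  rcases h with h | h
  · have h' : prv V p = 0 := h
    have hx0 : x = 0 := by omega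
    rw [h']
    rwa [← hx0]
  · rw [Finset.mem_filter] at h
    exact h.1

/-- the set of windows: elements of `V` other than its maximum. -/
def WSet (V : Finset ℕ) : Finset ℕ := V.erase (mx V)

lemma WSet_iff {V : Finset ℕ} (hne : V.Nonempty) {j : ℕ} :
    j ∈ WSet V ↔ j ∈ V ∧ ∃ x ∈ V, j < x := by
  rw [WSet, Finset.mem_erase]
  constructor
  · rintro ⟨hne', hj⟩
    refine ⟨hj, mx V, mx_mem hne, ?_⟩
    have := le_mx hj
    omega
  · rintro ⟨hj, x, hx, hjx⟩
    refine ⟨?_, hj⟩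
    have := le_mx hx
    omega

lemma prv_window {V : Finset ℕ} {j p : ℕ} (hj : j ∈ V) (hjp : j ≤ p)
    (hpn : p < nxt m V j) : prv V p = j := by
  have h1 : j ≤ prv V p := le_prv hj hjp
  rcases Nat.eq_or_lt_of_le h1 with he | hlt
  · exact he.symm
  · exfalso
    have h2 : prv V p ∈ V := prv_mem ⟨j, hj, hjp⟩
    have h3 := nxt_le (m := m) h2 hlt
    have h4 : prv V p ≤ p := prv_le
    omega

lemma window_no_cut {V : Finset ℕ} {j p p' : ℕ} (hj : j ≤ p) (hpp' : p < p')
    (hp' : p' < nxt m V j) {x : ℕ} (hx : x ∈ V) : ¬ (p < x ∧ x ≤ p') := by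
  rintro ⟨h1, h2⟩
  have := nxt_le (m := m) hx (by omega : j < x)
  omega

section HomeoDefs
variable (μ ν : Fin m → ℤ) (V : Finset ℕ)

/-- normalized coordinate -/
noncomputable def nrm (y : Fin m → ℝ) (p : ℕ) : ℝ :=
  if h : p < m then (y ⟨p, h⟩ - (μ ⟨p, h⟩ : ℝ)) / ((ν ⟨p, h⟩ : ℝ) - (μ ⟨p, h⟩ : ℝ)) else 0

/-- window coordinate of `y` in the window starting at `j`. -/
noncomputable def gval (y : Fin m → ℝ) (j : ℕ) : ℝ :=
  (∑ p ∈ Finset.Ico j (nxt m V j), nrm μ ν y p) / ((nxt m V j - j : ℕ) : ℝ)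

open Classical in
/-- the inverse map: from window coordinates `c` to a point of `E(V)`. -/
noncomputable def hval (c : ℕ → ℝ) : Fin m → ℝ := fun k =>
  if ∃ x ∈ V, x ≤ (k : ℕ) then
    (if ∃ x ∈ V, (k : ℕ) < x then
      (μ k : ℝ) + ((ν k : ℝ) - (μ k : ℝ)) *
        clamp (c (prv V (k : ℕ)) * ((nxt m V (prv V (k : ℕ)) - prv V (k : ℕ) : ℕ) : ℝ) -
          (((k : ℕ) - prv V (k : ℕ) : ℕ) : ℝ))
     else (ν k : ℝ))
  else (μ k : ℝ)

end HomeoDefs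
end S11

namespace S11
variable {m : ℕ}

section HomeoLemmas
variable {μ ν : Fin m → ℤ} {V : Finset ℕ}

lemma denom_pos (hμν : ∀ k, μ k < ν k) (k : Fin m) : (0:ℝ) < (ν k : ℝ) - (μ k : ℝ) := by
  have := hμν k
  have : (μ k : ℝ) < (ν k : ℝ) := by exact_mod_cast this
  linarith

lemma nrm_mem (hμν : ∀ k, μ k < ν k) {y : Fin m → ℝ} (hb : ∀ k : Fin m, (μ k : ℝ) ≤ y k ∧ y k ≤ (ν k : ℝ))
    {p : ℕ} (hp : p < m) : 0 ≤ nrm μ ν y p ∧ nrm μ ν y p ≤ 1 := by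
  rw [nrm, dif_pos hp]
  have hd := denom_pos hμν ⟨p, hp⟩
  have h1 := (hb ⟨p, hp⟩).1
  have h2 := (hb ⟨p, hp⟩).2
  constructor
  · apply div_nonneg (by linarith) (by linarith)
  · rw [div_le_one hd]
    linarith

lemma gval_hval (hμν : ∀ k, μ k < ν k) (hVm : ∀ x ∈ V, x ≤ m) (hne : V.Nonempty)
    (c : ℕ → ℝ) (hc : ∀ j, 0 ≤ c j ∧ c j ≤ 1) {j : ℕ} (hj : j ∈ WSet V) :
    gval μ ν V (hval μ ν V c) j = c j := by
  obtain ⟨hjV, x0, hx0, hjx0⟩ := (WSet_iff hne).1 hj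
  have hjm : j ≤ m := hVm j hjV
  have hN : nxt m V j ∈ V := nxt_mem hVm ⟨x0, hx0, hjx0⟩
  have hNm : nxt m V j ≤ m := hVm _ hN
  have hNgt : j < nxt m V j := nxt_gt hjm
  have hsum : ∀ p ∈ Finset.Ico j (nxt m V j), nrm μ ν (hval μ ν V c) p
      = clamp (c j * ((nxt m V j - j : ℕ) : ℝ) - ((p - j : ℕ) : ℝ)) := by
    intro p hp
    rw [Finset.mem_Ico] at hp
    have hpm : p < m := by omega
    have hprv : prv V p = j := prv_window hjV hp.1 hp.2
    have hv : hval μ ν V c ⟨p, hpm⟩ =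
        (μ ⟨p, hpm⟩ : ℝ) + ((ν ⟨p, hpm⟩ : ℝ) - (μ ⟨p, hpm⟩ : ℝ)) *
          clamp (c j * ((nxt m V j - j : ℕ) : ℝ) - ((p - j : ℕ) : ℝ)) := by
      unfold hval
      simp only [Fin.val_mk]
      rw [if_pos (⟨j, hjV, hp.1⟩ : ∃ x ∈ V, x ≤ p),
        if_pos (⟨nxt m V j, hN, hp.2⟩ : ∃ x ∈ V, p < x), hprv]
    rw [nrm, dif_pos hpm, hv]
    have hd := denom_pos hμν ⟨p, hpm⟩
    rw [add_sub_cancel_left]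
    exact mul_div_cancel_left₀ _ (ne_of_gt hd)
  unfold gval
  rw [Finset.sum_congr rfl hsum, Finset.sum_Ico_eq_sum_range]
  have hstep : ∀ i ∈ Finset.range (nxt m V j - j),
      clamp (c j * ((nxt m V j - j : ℕ) : ℝ) - ((j + i - j : ℕ) : ℝ))
        = clamp (c j * ((nxt m V j - j : ℕ) : ℝ) - (i : ℝ)) := by
    intro i _
    congr 2
    rw [Nat.add_sub_cancel_left]
  rw [Finset.sum_congr rfl hstep]
  have hL0 : (0:ℝ) ≤ ((nxt m V j - j : ℕ) : ℝ) := Nat.cast_nonneg _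
  rw [clamp_sum (nxt m V j - j) _ (mul_nonneg (hc j).1 hL0) ?_]
  · exact mul_div_cancel_right₀ _ (Nat.cast_ne_zero.2 (by omega))
  · calc c j * ((nxt m V j - j : ℕ) : ℝ) ≤ 1 * ((nxt m V j - j : ℕ) : ℝ) :=
        mul_le_mul_of_nonneg_right (hc j).2 hL0
    _ = ((nxt m V j - j : ℕ) : ℝ) := one_mul _

lemma gval_mem (hμν : ∀ k, μ k < ν k) (hVm : ∀ x ∈ V, x ≤ m) (hne : V.Nonempty)
    {y : Fin m → ℝ} (hy : y ∈ ESet μ ν V) {j : ℕ} (hj : j ∈ WSet V) :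
    0 ≤ gval μ ν V y j ∧ gval μ ν V y j ≤ 1 := by
  obtain ⟨hjV, x0, hx0, hjx0⟩ := (WSet_iff hne).1 hj
  have hjm : j ≤ m := hVm j hjV
  have hN : nxt m V j ∈ V := nxt_mem hVm ⟨x0, hx0, hjx0⟩
  have hNm : nxt m V j ≤ m := hVm _ hN
  have hNgt : j < nxt m V j := nxt_gt hjm
  have hmem : ∀ p ∈ Finset.Ico j (nxt m V j), 0 ≤ nrm μ ν y p ∧ nrm μ ν y p ≤ 1 := by
    intro p hp
    rw [Finset.mem_Ico] at hp
    exact nrm_mem hμν hy.1 (by omega)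
  have hs0 : 0 ≤ ∑ p ∈ Finset.Ico j (nxt m V j), nrm μ ν y p :=
    Finset.sum_nonneg fun p hp => (hmem p hp).1
  have hs1 : ∑ p ∈ Finset.Ico j (nxt m V j), nrm μ ν y p ≤ ((nxt m V j - j : ℕ) : ℝ) := by
    calc ∑ p ∈ Finset.Ico j (nxt m V j), nrm μ ν y p
        ≤ ∑ p ∈ Finset.Ico j (nxt m V j), (1:ℝ) := Finset.sum_le_sum fun p hp => (hmem p hp).2
    _ = ((nxt m V j - j : ℕ) : ℝ) := by
        rw [Finset.sum_const, Nat.card_Ico, nsmul_eq_mul, mul_one]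
  have hLpos : (0:ℝ) < ((nxt m V j - j : ℕ) : ℝ) := by
    exact_mod_cast Nat.sub_pos_of_lt hNgt
  unfold gval
  constructor
  · exact div_nonneg hs0 hLpos.le
  · rw [div_le_one hLpos]
    exact hs1

lemma hval_gval_window (hμν : ∀ k, μ k < ν k) (hVm : ∀ x ∈ V, x ≤ m)
    {y : Fin m → ℝ} (hy : y ∈ ESet μ ν V) {j : ℕ} (hjV : j ∈ V) (k : Fin m)
    (hjk : j ≤ (k : ℕ)) (hkN : (k : ℕ) < nxt m V j) (hNm : nxt m V j ≤ m) :
    (μ k : ℝ) + ((ν k : ℝ) - (μ k : ℝ)) *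
      clamp (gval μ ν V y j * ((nxt m V j - j : ℕ) : ℝ) - (((k : ℕ) - j : ℕ) : ℝ)) = y k := by
  have hu : gval μ ν V y j * ((nxt m V j - j : ℕ) : ℝ)
      = ∑ p ∈ Finset.Ico j (nxt m V j), nrm μ ν y p := by
    unfold gval
    rw [div_mul_cancel₀]
    exact Nat.cast_ne_zero.2 (by omega)
  rw [hu, Finset.sum_Ico_eq_sum_range]
  have hrec := clamp_reconstruct (nxt m V j - j) (fun i => nrm μ ν y (j + i)) ?_ ?_
    ((k : ℕ) - j) (by omega)
  · rw [hrec]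
    show (μ k : ℝ) + ((ν k : ℝ) - (μ k : ℝ)) * nrm μ ν y (j + ((k : ℕ) - j)) = y k
    rw [show j + ((k : ℕ) - j) = (k : ℕ) from by omega]
    unfold nrm
    rw [dif_pos k.isLt, Fin.eta]
    have hd := denom_pos hμν k
    field_simp
    ring
  · intro i hi
    exact nrm_mem hμν hy.1 (by omega)
  · intro i i' hii' hi' hlt1
    have hpm : j + i < m := by omega
    have hpm' : j + i' < m := by omega
    have hylt : y ⟨j + i, hpm⟩ < (ν ⟨j + i, hpm⟩ : ℝ) := by
      have hb : (fun i => nrm μ ν y (j + i)) i = nrm μ ν y (j + i) := rfl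
      rw [nrm, dif_pos hpm] at hlt1
      have hd := denom_pos hμν ⟨j + i, hpm⟩
      rw [div_lt_one hd] at hlt1
      linarith
    have hymu : y ⟨j + i', hpm'⟩ = (μ ⟨j + i', hpm'⟩ : ℝ) := by
      by_contra hne'
      have hgt : (μ ⟨j + i', hpm'⟩ : ℝ) < y ⟨j + i', hpm'⟩ :=
        lt_of_le_of_ne (hy.1 _).1 (Ne.symm hne')
      refine hy.2.2.2 ⟨j + i, hpm⟩ ⟨j + i', hpm'⟩ (by omega : j + i < j + i')
        (fun x hx hcon => ?_) hylt hgt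
      exact window_no_cut (m := m) (by omega : j ≤ j + i) (by omega : j + i < j + i')
        (by omega : j + i' < nxt m V j) hx hcon
    show nrm μ ν y (j + i') = 0
    rw [nrm, dif_pos hpm', hymu]
    simp

lemma hval_gval (hμν : ∀ k, μ k < ν k) (hVm : ∀ x ∈ V, x ≤ m) (hne : V.Nonempty)
    {y : Fin m → ℝ} (hy : y ∈ ESet μ ν V) :
    hval μ ν V (fun j => gval μ ν V y j) = y := by
  funext k
  unfold hval
  by_cases E1 : ∃ x ∈ V, x ≤ (k : ℕ)
  · by_cases E2 : ∃ x ∈ V, (k : ℕ) < x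
    · rw [if_pos E1, if_pos E2]
      have hjV : prv V (k : ℕ) ∈ V := prv_mem E1
      have hjk : prv V (k : ℕ) ≤ (k : ℕ) := prv_le
      have hN : nxt m V (prv V (k : ℕ)) ∈ V := by
        obtain ⟨x, hx, hkx⟩ := E2
        exact nxt_mem hVm ⟨x, hx, by omega⟩
      have hkN : (k : ℕ) < nxt m V (prv V (k : ℕ)) := by
        by_contra hcon
        push_neg at hcon
        have h1 := le_prv hN hcon
        have h2 : prv V (k : ℕ) < nxt m V (prv V (k : ℕ)) := nxt_gt (hVm _ hjV)
        omega
      exact hval_gval_window hμν hVm hy hjV k hjk hkN (hVm _ hN)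
    · rw [if_pos E1, if_neg E2]
      push_neg at E2
      exact (hy.2.2.1 k fun x hx => E2 x hx).symm
  · rw [if_neg E1]
    refine (hy.2.1 k fun x hx => ?_).symm
    by_contra hcon
    exact E1 ⟨x, hx, by omega⟩

lemma hval_mem (hμν : ∀ k, μ k < ν k) (hVm : ∀ x ∈ V, x ≤ m) (hne : V.Nonempty)
    (c : ℕ → ℝ) (hc : ∀ j, 0 ≤ c j ∧ c j ≤ 1) : hval μ ν V c ∈ ESet μ ν V := by
  refine ⟨?_, ?_, ?_, ?_⟩
  · intro k
    unfold hval
    split_ifs with E1 E2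
    · have hd := denom_pos hμν k
      set C := clamp (c (prv V (k : ℕ)) *
          ((nxt m V (prv V (k : ℕ)) - prv V (k : ℕ) : ℕ) : ℝ) -
          (((k : ℕ) - prv V (k : ℕ) : ℕ) : ℝ)) with hC
      have h1 : 0 ≤ C := clamp_nonneg _
      have h2 : C ≤ 1 := clamp_le_one _
      constructor
      · nlinarith
      · nlinarith
    · exact ⟨by have := denom_pos hμν k; linarith, le_rfl⟩
    · exact ⟨le_rfl, by have := denom_pos hμν k; linarith⟩
  · intro k hk
    unfold hval
    rw [if_neg]
    rintro ⟨x, hx, hxk⟩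
    exact absurd (hk x hx) (by omega)
  · intro k hk
    unfold hval
    obtain ⟨x0, hx0⟩ := hne
    rw [if_pos ⟨x0, hx0, hk x0 hx0⟩, if_neg]
    rintro ⟨x, hx, hkx⟩
    exact absurd (hk x hx) (by omega)
  · intro k k' hlt hnc h1 h2
    unfold hval at h1 h2
    by_cases E1 : ∃ x ∈ V, x ≤ (k : ℕ)
    · by_cases E2 : ∃ x ∈ V, (k : ℕ) < x
      · -- k in a window
        rw [if_pos E1, if_pos E2] at h1
        have E1' : ∃ x ∈ V, x ≤ (k' : ℕ) := by
          obtain ⟨x, hx, hxk⟩ := E1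
          exact ⟨x, hx, by omega⟩
        by_cases E2' : ∃ x ∈ V, (k' : ℕ) < x
        · rw [if_pos E1', if_pos E2'] at h2
          -- same window
          have hjV : prv V (k : ℕ) ∈ V := prv_mem E1
          have hjk : prv V (k : ℕ) ≤ (k : ℕ) := prv_le
          have hprv' : prv V (k' : ℕ) = prv V (k : ℕ) := by
            have ha : prv V (k : ℕ) ≤ prv V (k' : ℕ) := le_prv hjV (by omega)
            have hb : prv V (k' : ℕ) ∈ V := prv_mem E1'
            have hc' : prv V (k' : ℕ) ≤ (k' : ℕ) := prv_le
            have hd : prv V (k' : ℕ) ≤ (k : ℕ) := by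
              by_contra hcon
              push_neg at hcon
              exact hnc _ hb ⟨hcon, hc'⟩
            have he := le_prv hb hd
            omega
          rw [hprv'] at h2
          set j := prv V (k : ℕ) with hjdef
          set N := nxt m V j with hNdef
          have hd := denom_pos hμν k
          have hd' := denom_pos hμν k'
          -- from h1 : clamp (...) < 1
          have hcl1 : clamp (c j * ((N - j : ℕ) : ℝ) - (((k : ℕ) - j : ℕ) : ℝ)) < 1 := by
            by_contra hcon
            push_neg at hcon
            have : clamp _ = 1 := le_antisymm (clamp_le_one _) hcon
            rw [this, mul_one] at h1
            linarith
          have hx1 : c j * ((N - j : ℕ) : ℝ) - (((k : ℕ) - j : ℕ) : ℝ) < 1 :=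
            clamp_lt_one hcl1
          -- so the clamp at k' is 0
          have hcast : (((k : ℕ) - j : ℕ) : ℝ) + 1 ≤ (((k' : ℕ) - j : ℕ) : ℝ) := by
            have : ((k : ℕ) - j) + 1 ≤ ((k' : ℕ) - j) := by omega
            exact_mod_cast this
          have hcl0 : clamp (c j * ((N - j : ℕ) : ℝ) - (((k' : ℕ) - j : ℕ) : ℝ)) = 0 :=
            clamp_of_nonpos (by linarith)
          rw [hcl0, mul_zero, add_zero] at h2
          linarith
        · -- k' after the last cut : there is a cut in (k, k']
          obtain ⟨x, hx, hkx⟩ := E2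
          push_neg at E2'
          exact hnc x hx ⟨hkx, E2' x hx⟩
      · -- hval k = ν k, contradicting h1
        rw [if_pos E1, if_neg E2] at h1
        exact lt_irrefl _ h1
    · -- k before the first cut : hval k = μ k
      rw [if_neg E1] at h1
      by_cases E1' : ∃ x ∈ V, x ≤ (k' : ℕ)
      · obtain ⟨x, hx, hxk⟩ := E1'
        refine hnc x hx ⟨?_, hxk⟩
        by_contra hcon
        exact E1 ⟨x, hx, by omega⟩
      · rw [if_neg E1'] at h2
        exact lt_irrefl _ h2

lemma hval_congr (hne : V.Nonempty) {c c' : ℕ → ℝ}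
    (hcc : ∀ j ∈ WSet V, c j = c' j) : hval μ ν V c = hval μ ν V c' := by
  funext k
  unfold hval
  by_cases E1 : ∃ x ∈ V, x ≤ (k : ℕ)
  · by_cases E2 : ∃ x ∈ V, (k : ℕ) < x
    · rw [if_pos E1, if_pos E2, if_pos E1, if_pos E2, hcc _ ?_]
      refine (WSet_iff hne).2 ⟨prv_mem E1, ?_⟩
      obtain ⟨x, hx, hkx⟩ := E2
      have hple : prv V (k : ℕ) ≤ (k : ℕ) := prv_le
      exact ⟨x, hx, by omega⟩
    · rw [if_pos E1, if_neg E2, if_pos E1, if_neg E2]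
  · rw [if_neg E1, if_neg E1]

end HomeoLemmas
end S11

namespace S11
variable {m : ℕ}

section HomeoMain
variable {μ ν : Fin m → ℤ}

lemma stars_card {V : Finset ℕ} (hVm : ∀ x ∈ V, x ≤ m) (hne : V.Nonempty)
    {δ : Fin m → PD} (hred : Reduced δ) (hcut : cutset δ = V) :
    stars δ = (WSet V).card := by
  have h1 : stars δ = stars (canon (m := m) V) := by
    apply stars_eq_of_class hred (canon_reduced V hVm)
    rw [hcut, canon_cutset V hVm hne]
  have hWlt : ∀ b ∈ WSet V, b < m := by
    intro b hb
    obtain ⟨hbV, x, hx, hbx⟩ := (WSet_iff hne).1 hb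
    have := hVm x hx
    omega
  have hmemiff : ∀ k : Fin m, canon (m := m) V k = PD.star ↔ (k : ℕ) ∈ WSet V := by
    intro k
    rw [WSet_iff hne]
    unfold canon
    by_cases c1 : ∃ x ∈ V, (k : ℕ) < x
    · rw [if_pos c1]
      by_cases c2 : (k : ℕ) ∈ V
      · rw [if_pos c2]
        simp [c1, c2]
      · rw [if_neg c2]
        simp [c2]
    · rw [if_neg c1]
      simp [c1]
  rw [h1, stars]
  refine Finset.card_bij' (fun (k : Fin m) _ => (k : ℕ)) (fun b hb => ⟨b, hWlt b hb⟩)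
    ?_ ?_ ?_ ?_
  · intro a ha
    rw [Finset.mem_filter] at ha
    exact (hmemiff a).1 ha.2
  · intro b hb
    rw [Finset.mem_filter]
    exact ⟨Finset.mem_univ _, (hmemiff _).2 hb⟩
  · intro a ha
    exact Fin.ext rfl
  · intro b hb
    rfl

lemma ESet_homeo (hμν : ∀ k, μ k < ν k) {V : Finset ℕ} (hVm : ∀ x ∈ V, x ≤ m)
    (hne : V.Nonempty) :
    Nonempty ((ESet μ ν V) ≃ₜ (↥(WSet V) → Set.Icc (0:ℝ) 1)) := by
  classical
  have hGmem : ∀ (y : ESet μ ν V) (j : ↥(WSet V)), gval μ ν V y.1 j.1 ∈ Set.Icc (0:ℝ) 1 :=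
    fun y j => Set.mem_Icc.2 (gval_mem hμν hVm hne y.2 j.2)
  have hcmem : ∀ (c : ↥(WSet V) → Set.Icc (0:ℝ) 1) (j : ℕ),
      0 ≤ (if h : j ∈ WSet V then (c ⟨j, h⟩ : ℝ) else 0) ∧
      (if h : j ∈ WSet V then (c ⟨j, h⟩ : ℝ) else 0) ≤ 1 := by
    intro c j
    split_ifs with h
    · exact Set.mem_Icc.1 (c ⟨j, h⟩).2
    · exact ⟨le_rfl, zero_le_one⟩
  refine ⟨Homeomorph.mk ⟨fun y j => ⟨gval μ ν V y.1 j.1, hGmem y j⟩,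
    fun c => ⟨hval μ ν V (fun j => if h : j ∈ WSet V then (c ⟨j, h⟩ : ℝ) else 0),
      hval_mem hμν hVm hne _ (hcmem c)⟩, ?_, ?_⟩ ?_ ?_⟩
  · intro y
    apply Subtype.ext
    show hval μ ν V (fun j => if h : j ∈ WSet V then gval μ ν V y.1 j else 0) = y.1
    have hcongr := hval_congr (μ := μ) (ν := ν) hne
      (c := fun j => if h : j ∈ WSet V then gval μ ν V y.1 j else 0)
      (c' := fun j => gval μ ν V y.1 j) (fun j hj => dif_pos hj)
    rw [hcongr]
    exact hval_gval hμν hVm hne y.2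
  · intro c
    funext j
    apply Subtype.ext
    show gval μ ν V (hval μ ν V
      (fun j' => if h : j' ∈ WSet V then (c ⟨j', h⟩ : ℝ) else 0)) j.1 = (c j : ℝ)
    rw [gval_hval hμν hVm hne _ (hcmem c) j.2, dif_pos j.2]
  · refine continuous_pi fun j => Continuous.subtype_mk ?_ _
    have hcont : Continuous fun y : Fin m → ℝ => gval μ ν V y j.1 := by
      unfold gval
      refine Continuous.div_const ?_ _
      refine continuous_finset_sum _ fun p hp => ?_
      rw [Finset.mem_Ico] at hp
      obtain ⟨hjV, x, hx, hjx⟩ := (WSet_iff hne).1 j.2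
      have hNm : nxt m V j.1 ≤ m := hVm _ (nxt_mem hVm ⟨x, hx, hjx⟩)
      have hpm : p < m := by omega
      unfold nrm
      simp only [dif_pos hpm]
      exact ((continuous_apply _).sub continuous_const).div_const _
    exact hcont.comp continuous_subtype_val
  · refine Continuous.subtype_mk ?_ _
    refine continuous_pi fun k => ?_
    show Continuous fun c : ↥(WSet V) → Set.Icc (0:ℝ) 1 =>
      hval μ ν V (fun j' => if h : j' ∈ WSet V then (c ⟨j', h⟩ : ℝ) else 0) k
    unfold hval
    by_cases E1 : ∃ x ∈ V, x ≤ (k : ℕ)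
    · by_cases E2 : ∃ x ∈ V, (k : ℕ) < x
      · simp only [if_pos E1, if_pos E2]
        refine continuous_const.add (Continuous.mul continuous_const ?_)
        refine clamp_continuous.comp ?_
        refine Continuous.sub (Continuous.mul ?_ continuous_const) continuous_const
        by_cases hw : prv V (k : ℕ) ∈ WSet V
        · simp only [dif_pos hw]
          exact continuous_subtype_val.comp (continuous_apply _)
        · simp only [dif_neg hw]
          exact continuous_const
      · simp only [if_pos E1, if_neg E2]
        exact continuous_const
    · simp only [if_neg E1]
      exact continuous_const

end HomeoMain
end S11

/-- the reduced vertices are exactly the `m+1` words `0^j 1^{m−j}`; the map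
`A ↦ v(A)` is a bijection from L-classes onto nonempty sets of reduced vertices; it takes
intersections to intersections (with `U(A) ∩ U(B) = ∅` when `v(A) ∩ v(B) = ∅`); and the union
`U(A)` of an L-class whose paradiagrams have `k` stars is homeomorphic to the cube `[0,1]^k`. -/
theorem stmt_11 (m : ℕ) (hm : 1 ≤ m) (μ ν : Fin m → ℤ) (h : ∀ k, μ k < ν k) :
    -- the reduced vertices are exactly the m+1 words 0^j 1^{m-j}
    ({δ : Fin m → PD | RV δ} =
      {δ | ∃ j ≤ m, δ = fun k : Fin m => if k.val < j then PD.zero else PD.one}) ∧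
    -- (i) A ↦ v(A) is a bijection onto nonempty subsets of the reduced vertices
    (∀ A : Set (Fin m → PD), IsLClass A → (vset μ ν A).Nonempty ∧ vset μ ν A ⊆ {δ | RV δ}) ∧
    (∀ A B : Set (Fin m → PD), IsLClass A → IsLClass B → vset μ ν A = vset μ ν B → A = B) ∧
    (∀ V : Set (Fin m → PD), V ⊆ {δ | RV δ} → V.Nonempty →
      ∃ A : Set (Fin m → PD), IsLClass A ∧ vset μ ν A = V) ∧
    -- (ii) intersections correspond to intersections
    (∀ A B : Set (Fin m → PD), IsLClass A → IsLClass B →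
      ((vset μ ν A ∩ vset μ ν B).Nonempty →
        ∀ C : Set (Fin m → PD), IsLClass C → vset μ ν C = vset μ ν A ∩ vset μ ν B →
          UF μ ν A ∩ UF μ ν B = UF μ ν C) ∧
      (vset μ ν A ∩ vset μ ν B = ∅ → UF μ ν A ∩ UF μ ν B = ∅)) ∧
    -- (iii) U(A) is homeomorphic to the closed cube [0,1]^k
    (∀ A : Set (Fin m → PD), IsLClass A → ∀ δ ∈ A,
      Nonempty ((UF μ ν A) ≃ₜ (Fin (stars δ) → (Set.Icc (0:ℝ) 1)))) := by
  classical
  refine ⟨?_, ?_, ?_, ?_, ?_, ?_⟩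
  · ext δ
    simp only [Set.mem_setOf_eq]
    exact S11.rv_iff
  · intro A hA
    obtain ⟨V, hne, hVm, rfl⟩ := S11.isLClass_iff.1 hA
    constructor
    · rw [S11.vset_class h hVm hne]
      obtain ⟨j, hj⟩ := hne
      exact ⟨S11.vtx m j, j, hj, rfl⟩
    · exact fun δ' hδ' => hδ'.1
  · intro A B hA hB hveq
    obtain ⟨V, hneV, hVm, rfl⟩ := S11.isLClass_iff.1 hA
    obtain ⟨W, hneW, hWm, rfl⟩ := S11.isLClass_iff.1 hB
    rw [S11.vset_class h hVm hneV, S11.vset_class h hWm hneW] at hveq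
    have hVW : V = W := by
      ext j
      constructor
      · intro hj
        have h1 : S11.vtx m j ∈ {δ' | ∃ j' ∈ W, δ' = S11.vtx m j'} :=
          hveq ▸ (⟨j, hj, rfl⟩ : S11.vtx m j ∈ {δ' | ∃ j' ∈ V, δ' = S11.vtx m j'})
        obtain ⟨j', hj', he⟩ := h1
        rwa [S11.vtx_inj (hVm j hj) (hWm j' hj') he]
      · intro hj
        have h1 : S11.vtx m j ∈ {δ' | ∃ j' ∈ V, δ' = S11.vtx m j'} :=
          hveq ▸ (⟨j, hj, rfl⟩ : S11.vtx m j ∈ {δ' | ∃ j' ∈ W, δ' = S11.vtx m j'})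
        obtain ⟨j', hj', he⟩ := h1
        rwa [S11.vtx_inj (hWm j hj) (hVm j' hj') he]
    rw [hVW]
  · intro V' hV'sub hV'ne
    set S : Finset ℕ := (Finset.range (m+1)).filter (fun j => S11.vtx m j ∈ V') with hSdef
    have hSmem : ∀ j, j ∈ S ↔ j ≤ m ∧ S11.vtx m j ∈ V' := by
      intro j
      rw [hSdef, Finset.mem_filter, Finset.mem_range, Nat.lt_succ_iff]
    have hSm : ∀ j ∈ S, j ≤ m := fun j hj => ((hSmem j).1 hj).1
    have hSne : S.Nonempty := by
      obtain ⟨δ', hδ'⟩ := hV'ne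
      obtain ⟨j, hjm, rfl⟩ := S11.rv_iff.1 (hV'sub hδ')
      exact ⟨j, (hSmem j).2 ⟨hjm, hδ'⟩⟩
    refine ⟨{δ | Reduced δ ∧ S11.cutset δ = S}, S11.isLClass_iff.2 ⟨S, hSne, hSm, rfl⟩, ?_⟩
    rw [S11.vset_class h hSm hSne]
    ext δ'
    simp only [Set.mem_setOf_eq]
    constructor
    · rintro ⟨j, hj, rfl⟩
      exact ((hSmem j).1 hj).2
    · intro hδ'
      obtain ⟨j, hjm, rfl⟩ := S11.rv_iff.1 (hV'sub hδ')
      exact ⟨j, (hSmem j).2 ⟨hjm, hδ'⟩, rfl⟩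
  · intro A B hA hB
    obtain ⟨V, hneV, hVm, rfl⟩ := S11.isLClass_iff.1 hA
    obtain ⟨W, hneW, hWm, rfl⟩ := S11.isLClass_iff.1 hB
    constructor
    · rintro - C hC hveq
      obtain ⟨U, hneU, hUm, rfl⟩ := S11.isLClass_iff.1 hC
      rw [S11.vset_class h hUm hneU, S11.vset_class h hVm hneV,
        S11.vset_class h hWm hneW] at hveq
      have hUVW : U = V ∩ W := by
        ext j
        rw [Finset.mem_inter]
        constructor
        · intro hj
          have h1 : S11.vtx m j ∈ ({δ' | ∃ j' ∈ V, δ' = S11.vtx m j'} ∩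
              {δ' | ∃ j' ∈ W, δ' = S11.vtx m j'}) := by
            rw [← hveq]
            exact ⟨j, hj, rfl⟩
          obtain ⟨⟨j1, hj1, he1⟩, ⟨j2, hj2, he2⟩⟩ := h1
          constructor
          · rwa [S11.vtx_inj (hUm j hj) (hVm j1 hj1) he1]
          · rwa [S11.vtx_inj (hUm j hj) (hWm j2 hj2) he2]
        · rintro ⟨hjV, hjW⟩
          have h1 : S11.vtx m j ∈ {δ' | ∃ j' ∈ U, δ' = S11.vtx m j'} := by
            rw [hveq]
            exact ⟨⟨j, hjV, rfl⟩, ⟨j, hjW, rfl⟩⟩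
          obtain ⟨j1, hj1, he1⟩ := h1
          rwa [S11.vtx_inj (hVm j hjV) (hUm j1 hj1) he1]
      rw [S11.UF_class_eq h hVm hneV, S11.UF_class_eq h hWm hneW,
        S11.UF_class_eq h hUm hneU, S11.E_inter h hVm hWm, hUVW]
    · intro hempty
      rw [S11.UF_class_eq h hVm hneV, S11.UF_class_eq h hWm hneW, S11.E_inter h hVm hWm]
      have hVW : V ∩ W = ∅ := by
        by_contra hc
        obtain ⟨j, hj⟩ := Finset.nonempty_iff_ne_empty.2 hc
        rw [Finset.mem_inter] at hj
        have h1 : S11.vtx m j ∈ vset μ ν {δ | Reduced δ ∧ S11.cutset δ = V} := by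
          rw [S11.vset_class h hVm hneV]
          exact ⟨j, hj.1, rfl⟩
        have h2 : S11.vtx m j ∈ vset μ ν {δ | Reduced δ ∧ S11.cutset δ = W} := by
          rw [S11.vset_class h hWm hneW]
          exact ⟨j, hj.2, rfl⟩
        have h3 := Set.mem_inter h1 h2
        rw [hempty] at h3
        exact h3
      rw [hVW, S11.E_empty h hm]
  · intro A hA δ hδ
    obtain ⟨V, hneV, hVm, rfl⟩ := S11.isLClass_iff.1 hA
    obtain ⟨hred, hcut⟩ := hδ
    have hcard := S11.stars_card hVm hneV hred hcut
    obtain ⟨e0⟩ := S11.ESet_homeo h hVm hneV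
    have ecard : Fintype.card (↥(S11.WSet V)) = stars δ := by
      rw [Fintype.card_coe, hcard]
    have e : Fin (stars δ) ≃ ↥(S11.WSet V) := (Fintype.equivFinOfCardEq ecard).symm
    have hUE : UF μ ν {δ | Reduced δ ∧ S11.cutset δ = V} = S11.ESet μ ν V :=
      S11.UF_class_eq h hVm hneV
    exact ⟨(Homeomorph.setCongr hUE).trans
      (e0.trans (Homeomorph.piCongrLeft (Y := fun _ => Set.Icc (0:ℝ) 1) e).symm)⟩
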